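/- arXiv:1605.01041 — 6 statements merged into one kernel-verified Lean document; each statement's English description precedes it below -/
import Mathlib

section
/- Suppose T_n converges to T in generalised strong resolvent sense. Then for every λ in the ε-approximate point spectrum of T and every unit vector x ∈ dom(T) with ‖(T−λ)x‖ < ε, there exist n_λ ∈ ℕ and unit vectors x_n ∈ dom(T_n), n ≥ n_λ, with ‖(T_n − λ)x_n‖ < ε and ‖x_n − x‖ → 0; in particular λ ∈ σ_{app,ε}(T_n) for all n ≥ n_λ. -/
open Filter Topology

noncomputable section

variable {H₀ : Type} [NormedAddCommGroup H₀] [InnerProductSpace ℂ H₀] [CompleteSpace H₀]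

/-- Weak convergence `x n ⇀ x₀` in the Hilbert space `H₀`. -/
def WeakTendsto (x : ℕ → H₀) (x₀ : H₀) : Prop :=
  ∀ y : H₀, Tendsto (fun n => (inner ℂ (x n - x₀) y : ℂ)) atTop (nhds 0)

/-- `P` is the orthogonal projection of `H₀` onto the subspace `Hsp`. -/
def IsOrthProj (Hsp : Submodule ℂ H₀) (P : H₀ →L[ℂ] H₀) : Prop :=
  ∀ x : H₀, P x ∈ Hsp ∧ x - P x ∈ Hspᗮ

/-- The operator `T` with domain `dom` is densely defined in the subspace `Hsp` and maps its
domain into `Hsp`. -/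
def ActsIn (Hsp dom : Submodule ℂ H₀) (T : H₀ →ₗ[ℂ] H₀) : Prop :=
  dom ≤ Hsp ∧ dom.topologicalClosure = Hsp ∧ ∀ x ∈ dom, T x ∈ Hsp

/-- The operator `T` with domain `dom` is closed. -/
def IsClosedOp (dom : Submodule ℂ H₀) (T : H₀ →ₗ[ℂ] H₀) : Prop :=
  ∀ (x : ℕ → H₀) (u v : H₀), (∀ k, x k ∈ dom) →
    Tendsto x atTop (nhds u) → Tendsto (fun k => T (x k)) atTop (nhds v) →
    u ∈ dom ∧ T u = v

/-- `R` is the resolvent `(T - lam)⁻¹` of the operator `T` acting in `Hsp` with domain `dom`,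
extended by `0` on the orthogonal complement of `Hsp`. -/
def InResolvent (Hsp dom : Submodule ℂ H₀) (T : H₀ →ₗ[ℂ] H₀) (lam : ℂ)
    (R : H₀ →L[ℂ] H₀) : Prop :=
  (∀ y ∈ Hsp, R y ∈ dom ∧ T (R y) - lam • R y = y) ∧
  (∀ x ∈ dom, R (T x - lam • x) = x) ∧
  ∀ y ∈ Hspᗮ, R y = 0

/-- `lam` belongs to the resolvent set `ρ(T)`. -/
def InResolventSet (Hsp dom : Submodule ℂ H₀) (T : H₀ →ₗ[ℂ] H₀) (lam : ℂ) : Prop :=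
  ∃ R : H₀ →L[ℂ] H₀, InResolvent Hsp dom T lam R

/-- `lam` belongs to the limiting essential spectrum of the sequence `(Tₙ)`. -/
def LimEssSpectrum (domn : ℕ → Submodule ℂ H₀) (Tn : ℕ → H₀ →ₗ[ℂ] H₀) (lam : ℂ) : Prop :=
  ∃ (φ : ℕ → ℕ) (x : ℕ → H₀), StrictMono φ ∧ (∀ k, x k ∈ domn (φ k)) ∧
    (∀ k, ‖x k‖ = 1) ∧ WeakTendsto x 0 ∧
    Tendsto (fun k => ‖Tn (φ k) (x k) - lam • x k‖) atTop (nhds 0)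

/-- `lam` belongs to the limiting essential `eps`-near spectrum of the sequence `(Tₙ)`. -/
def LimEssNear (domn : ℕ → Submodule ℂ H₀) (Tn : ℕ → H₀ →ₗ[ℂ] H₀) (eps : ℝ) (lam : ℂ) :
    Prop :=
  ∃ (φ : ℕ → ℕ) (x : ℕ → H₀), StrictMono φ ∧ (∀ k, x k ∈ domn (φ k)) ∧
    (∀ k, ‖x k‖ = 1) ∧ WeakTendsto x 0 ∧
    Tendsto (fun k => ‖Tn (φ k) (x k) - lam • x k‖) atTop (nhds eps)

/-- `lam` belongs to the limiting approximate point spectrum of the sequence `(Tₙ)`. -/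
def LimApproxSpectrum (domn : ℕ → Submodule ℂ H₀) (Tn : ℕ → H₀ →ₗ[ℂ] H₀) (lam : ℂ) : Prop :=
  ∃ (φ : ℕ → ℕ) (x : ℕ → H₀), StrictMono φ ∧ (∀ k, x k ∈ domn (φ k)) ∧
    (∀ k, ‖x k‖ = 1) ∧
    Tendsto (fun k => ‖Tn (φ k) (x k) - lam • x k‖) atTop (nhds 0)

/-- `lam` belongs to the essential spectrum of `T`. -/
def EssSpectrum (dom : Submodule ℂ H₀) (T : H₀ →ₗ[ℂ] H₀) (lam : ℂ) : Prop :=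
  ∃ x : ℕ → H₀, (∀ k, x k ∈ dom) ∧ (∀ k, ‖x k‖ = 1) ∧ WeakTendsto x 0 ∧
    Tendsto (fun k => ‖T (x k) - lam • x k‖) atTop (nhds 0)

/-- `lam` belongs to the essential `eps`-near spectrum of `T`. -/
def EssNear (dom : Submodule ℂ H₀) (T : H₀ →ₗ[ℂ] H₀) (eps : ℝ) (lam : ℂ) : Prop :=
  ∃ x : ℕ → H₀, (∀ k, x k ∈ dom) ∧ (∀ k, ‖x k‖ = 1) ∧ WeakTendsto x 0 ∧
    Tendsto (fun k => ‖T (x k) - lam • x k‖) atTop (nhds eps)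

/-- `lam` belongs to the approximate point spectrum of `T`. -/
def ApproxSpectrum (dom : Submodule ℂ H₀) (T : H₀ →ₗ[ℂ] H₀) (lam : ℂ) : Prop :=
  ∃ x : ℕ → H₀, (∀ k, x k ∈ dom) ∧ (∀ k, ‖x k‖ = 1) ∧
    Tendsto (fun k => ‖T (x k) - lam • x k‖) atTop (nhds 0)

/-- `lam` belongs to the point spectrum of `T`. -/
def PointSpectrum (dom : Submodule ℂ H₀) (T : H₀ →ₗ[ℂ] H₀) (lam : ℂ) : Prop :=
  ∃ x ∈ dom, x ≠ 0 ∧ T x = lam • x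

/-- `lam` belongs to the `eps`-approximate point spectrum of `T`. -/
def PseudoAppSpectrum (dom : Submodule ℂ H₀) (T : H₀ →ₗ[ℂ] H₀) (eps : ℝ) (lam : ℂ) : Prop :=
  ∃ x ∈ dom, ‖x‖ = 1 ∧ ‖T x - lam • x‖ < eps

/-- `lam` belongs to the spectrum of `T` acting in `Hsp`. -/
def InSpec (Hsp dom : Submodule ℂ H₀) (T : H₀ →ₗ[ℂ] H₀) (lam : ℂ) : Prop :=
  ¬ InResolventSet Hsp dom T lam

/-- `lam` belongs to the `eps`-pseudospectrum of `T` acting in `Hsp`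
(with the convention `‖(T-lam)⁻¹‖ = ∞` on the spectrum). -/
def InPseudoSpec (Hsp dom : Submodule ℂ H₀) (T : H₀ →ₗ[ℂ] H₀) (eps : ℝ) (lam : ℂ) : Prop :=
  (¬ InResolventSet Hsp dom T lam) ∨
    ∃ R : H₀ →L[ℂ] H₀, InResolvent Hsp dom T lam R ∧ 1 / eps < ‖R‖

/-- Generalised strong resolvent convergence `Tₙ → T`. -/
def GSRConv (Hsp dom : Submodule ℂ H₀) (T : H₀ →ₗ[ℂ] H₀)
    (Hn domn : ℕ → Submodule ℂ H₀) (Tn : ℕ → H₀ →ₗ[ℂ] H₀) : Prop :=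
  ∃ (n₀ : ℕ) (lam₀ : ℂ) (R : H₀ →L[ℂ] H₀) (Rn : ℕ → H₀ →L[ℂ] H₀),
    InResolvent Hsp dom T lam₀ R ∧
    (∀ n, n ≥ n₀ → InResolvent (Hn n) (domn n) (Tn n) lam₀ (Rn n)) ∧
    ∀ y : H₀, Tendsto (fun n => Rn n y) atTop (nhds (R y))

/-- Generalised norm resolvent convergence `Tₙ → T`. -/
def GNRConv (Hsp dom : Submodule ℂ H₀) (T : H₀ →ₗ[ℂ] H₀)
    (Hn domn : ℕ → Submodule ℂ H₀) (Tn : ℕ → H₀ →ₗ[ℂ] H₀) : Prop :=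
  ∃ (n₀ : ℕ) (lam₀ : ℂ) (R : H₀ →L[ℂ] H₀) (Rn : ℕ → H₀ →L[ℂ] H₀),
    InResolvent Hsp dom T lam₀ R ∧
    (∀ n, n ≥ n₀ → InResolvent (Hn n) (domn n) (Tn n) lam₀ (Rn n)) ∧
    Tendsto (fun n => ‖Rn n - R‖) atTop (nhds 0)

/-- The sequence of bounded operators `(Bₙ)`, `Bₙ ∈ L(Hₙ)`, is discretely compact: images of
bounded sequences `xₙ ∈ Hₙ` have subsequences converging in norm to an element of `Hsp`. -/
def DiscretelyCompact (Hsp : Submodule ℂ H₀) (Hn : ℕ → Submodule ℂ H₀)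
    (B : ℕ → H₀ →L[ℂ] H₀) : Prop :=
  ∀ (φ : ℕ → ℕ) (x : ℕ → H₀), StrictMono φ → (∀ k, x k ∈ Hn (φ k)) →
    (∃ C : ℝ, ∀ k, ‖x k‖ ≤ C) →
    ∃ (ψ : ℕ → ℕ) (z : H₀), StrictMono ψ ∧ z ∈ Hsp ∧
      Tendsto (fun k => B (φ (ψ k)) (x (ψ k))) atTop (nhds z)

/-- `S` with domain `domS` is the Hilbert-space adjoint of the densely defined operator `T`
acting in `Hsp` with domain `dom`. -/
def IsAdjointOp (Hsp dom : Submodule ℂ H₀) (T : H₀ →ₗ[ℂ] H₀)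
    (domS : Submodule ℂ H₀) (S : H₀ →ₗ[ℂ] H₀) : Prop :=
  domS ≤ Hsp ∧ ∀ y ∈ Hsp, ∀ z ∈ Hsp,
    ((y ∈ domS ∧ S y = z) ↔ ∀ x ∈ dom, (inner ℂ (T x) y : ℂ) = inner ℂ x z)

/-- The sequence of bounded operators `(Aₙ)` converges strongly. -/
def StrongConvSeq (A : ℕ → H₀ →L[ℂ] H₀) : Prop :=
  ∃ A₀ : H₀ →L[ℂ] H₀, ∀ y : H₀, Tendsto (fun n => A n y) atTop (nhds (A₀ y))

/-- `lam` belongs to the region of boundedness `Δ_b((Tₙ))`. -/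
def InRegionOfBoundedness (Hn domn : ℕ → Submodule ℂ H₀) (Tn : ℕ → H₀ →ₗ[ℂ] H₀)
    (lam : ℂ) : Prop :=
  ∃ (n₀ : ℕ) (C : ℝ) (Rn : ℕ → H₀ →L[ℂ] H₀),
    ∀ n, n ≥ n₀ → InResolvent (Hn n) (domn n) (Tn n) lam (Rn n) ∧ ‖Rn n‖ ≤ C


theorem stmt13 [TopologicalSpace.SeparableSpace H₀]
    (Hsp dom : Submodule ℂ H₀) (T : H₀ →ₗ[ℂ] H₀)
    (hHcl : IsClosed ((Hsp : Set H₀)))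
    (hT : ActsIn Hsp dom T) (hTcl : IsClosedOp dom T)
    (Hn domn : ℕ → Submodule ℂ H₀) (Tn : ℕ → H₀ →ₗ[ℂ] H₀)
    (hHncl : ∀ n, IsClosed ((Hn n : Set H₀)))
    (hTn : ∀ n, ActsIn (Hn n) (domn n) (Tn n))
    (hTncl : ∀ n, IsClosedOp (domn n) (Tn n))
    (P : H₀ →L[ℂ] H₀) (Pn : ℕ → H₀ →L[ℂ] H₀)
    (hP : IsOrthProj Hsp P) (hPn : ∀ n, IsOrthProj (Hn n) (Pn n))
    (hPconv : ∀ y : H₀, Tendsto (fun n => Pn n y) atTop (nhds (P y)))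
    (hconv : GSRConv Hsp dom T Hn domn Tn)
    (eps : ℝ) (heps : 0 < eps) (lam : ℂ) (x : H₀)
    (hx : x ∈ dom) (hx1 : ‖x‖ = 1) (hxeps : ‖T x - lam • x‖ < eps) :
    ∃ (nlam : ℕ) (xn : ℕ → H₀),
      (∀ n, n ≥ nlam → xn n ∈ domn n ∧ ‖xn n‖ = 1 ∧ ‖Tn n (xn n) - lam • xn n‖ < eps) ∧
      Tendsto (fun n => ‖xn n - x‖) atTop (nhds 0) ∧
      ∀ n, n ≥ nlam → PseudoAppSpectrum (domn n) (Tn n) eps lam := by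
  classical
  obtain ⟨n₀, lam₀, R, Rn, hR, hRn, hRconv⟩ := hconv
  set y : H₀ := T x - lam₀ • x with hy_def
  have hxHsp : x ∈ Hsp := hT.1 hx
  have hy : y ∈ Hsp := Hsp.sub_mem (hT.2.2 x hx) (Hsp.smul_mem _ hxHsp)
  have hRy : R y = x := hR.2.1 x hx
  set u : ℕ → H₀ := fun n => Rn n y with hu_def
  have hu_tend : Tendsto u atTop (nhds x) := by
    simpa [hu_def, hRy] using hRconv y
  -- For n ≥ n₀, u n ∈ domn n and Tn n (u n) - lam₀ • u n = Pn n y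
  have key : ∀ n, n ≥ n₀ → u n ∈ domn n ∧ Tn n (u n) - lam₀ • u n = Pn n y := by
    intro n hn
    obtain ⟨h1, h2, h3⟩ := hRn n hn
    have hPny : Pn n y ∈ Hn n := (hPn n y).1
    have hPny' : y - Pn n y ∈ (Hn n)ᗮ := (hPn n y).2
    have hz : Rn n (y - Pn n y) = 0 := h3 _ hPny'
    have hun : u n = Rn n (Pn n y) := by
      have h := map_sub (Rn n) y (Pn n y)
      rw [hz] at h
      exact sub_eq_zero.mp h.symm
    obtain ⟨hd, he⟩ := h1 (Pn n y) hPny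
    exact ⟨hun ▸ hd, hun ▸ he⟩
  -- v n := Tn n (u n) - lam • u n
  set v : ℕ → H₀ := fun n => Tn n (u n) - lam • u n with hv_def
  have hPy : P y = y := by
    have h1 : P y ∈ Hsp := (hP y).1
    have h2 : y - P y ∈ Hspᗮ := (hP y).2
    have h3 : y - P y ∈ Hsp := Hsp.sub_mem hy h1
    have : y - P y = 0 := by
      have := h2 (y - P y) h3
      simpa [inner_self_eq_zero] using this
    have := sub_eq_zero.mp this
    exact this.symm
  have hv_tend : Tendsto v atTop (nhds (T x - lam • x)) := by
    have h1 : Tendsto (fun n => Pn n y + (lam₀ - lam) • u n) atTop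
        (nhds (P y + (lam₀ - lam) • x)) :=
      (hPconv y).add (tendsto_const_nhds.smul hu_tend)
    have h2 : P y + (lam₀ - lam) • x = T x - lam • x := by
      rw [hPy, hy_def]
      module
    rw [h2] at h1
    refine h1.congr' ?_
    filter_upwards [eventually_ge_atTop n₀] with n hn
    have := (key n hn).2
    rw [hv_def]
    simp only
    rw [← this]
    module
  have hnorm_u : Tendsto (fun n => ‖u n‖) atTop (nhds 1) := by
    simpa [hx1] using hu_tend.norm
  have hnorm_v : Tendsto (fun n => ‖v n‖) atTop (nhds ‖T x - lam • x‖) := hv_tend.norm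
  -- the normalized sequence
  set xn : ℕ → H₀ := fun n => ((‖u n‖ : ℂ))⁻¹ • u n with hxn_def
  have hinv : Tendsto (fun n => ((‖u n‖ : ℂ))⁻¹) atTop (nhds 1) := by
    have h1 : Tendsto (fun n => ((‖u n‖ : ℝ) : ℂ)) atTop (nhds (1 : ℂ)) := by
      simpa [Function.comp_def] using (Complex.continuous_ofReal.tendsto 1).comp hnorm_u
    simpa using h1.inv₀ (by norm_num)
  have hxn_tend : Tendsto xn atTop (nhds x) := by
    have := hinv.smul hu_tend
    simpa using this
  have hxn_sub : Tendsto (fun n => ‖xn n - x‖) atTop (nhds 0) := by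
    have := (hxn_tend.sub_const x).norm
    simpa using this
  have hquot : Tendsto (fun n => ‖u n‖⁻¹ * ‖v n‖) atTop (nhds ‖T x - lam • x‖) := by
    have := (hnorm_u.inv₀ (by norm_num)).mul hnorm_v
    simpa using this
  have hev : ∀ᶠ n in atTop, n ≥ n₀ ∧ 0 < ‖u n‖ ∧ ‖u n‖⁻¹ * ‖v n‖ < eps := by
    have e1 : ∀ᶠ n in atTop, n ≥ n₀ := eventually_ge_atTop n₀
    have e2 : ∀ᶠ n in atTop, 0 < ‖u n‖ :=
      hnorm_u.eventually (eventually_gt_nhds (by norm_num))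
    have e3 : ∀ᶠ n in atTop, ‖u n‖⁻¹ * ‖v n‖ < eps :=
      hquot.eventually (eventually_lt_nhds hxeps)
    filter_upwards [e1, e2, e3] with n h1 h2 h3 using ⟨h1, h2, h3⟩
  obtain ⟨nlam, hnlam⟩ := eventually_atTop.mp hev
  refine ⟨nlam, xn, ?_, hxn_sub, ?_⟩
  · intro n hn
    obtain ⟨h1, h2, h3⟩ := hnlam n hn
    have hud : u n ∈ domn n := (key n h1).1
    have hmem : xn n ∈ domn n := (domn n).smul_mem _ hud
    have hnorm1 : ‖xn n‖ = 1 := by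
      rw [hxn_def]
      simp only [norm_smul, norm_inv, Complex.norm_real, Real.norm_eq_abs, abs_of_pos h2]
      exact inv_mul_cancel₀ (ne_of_gt h2)
    have hcalc : Tn n (xn n) - lam • xn n = ((‖u n‖ : ℂ))⁻¹ • v n := by
      rw [hxn_def, hv_def]
      simp only [map_smul, smul_sub, smul_comm lam]
    have hlt : ‖Tn n (xn n) - lam • xn n‖ < eps := by
      rw [hcalc, norm_smul]
      simpa [norm_inv, Complex.norm_real, Real.norm_eq_abs, abs_of_pos h2] using h3
    exact ⟨hmem, hnorm1, hlt⟩
  · intro n hn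
    obtain ⟨h1, h2, h3⟩ := hnlam n hn
    have hud : u n ∈ domn n := (key n h1).1
    refine ⟨xn n, (domn n).smul_mem _ hud, ?_, ?_⟩
    · rw [hxn_def]
      simp only [norm_smul, norm_inv, Complex.norm_real, Real.norm_eq_abs, abs_of_pos h2]
      exact inv_mul_cancel₀ (ne_of_gt h2)
    · have hcalc : Tn n (xn n) - lam • xn n = ((‖u n‖ : ℂ))⁻¹ • v n := by
        rw [hxn_def, hv_def]
        simp only [map_smul, smul_sub, smul_comm lam]
      rw [hcalc, norm_smul]
      simpa [norm_inv, Complex.norm_real, Real.norm_eq_abs, abs_of_pos h2] using h3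


end
end

section
/- Suppose T_n → T and T_n* → T* in generalised strong resolvent sense, λ ∈ ρ(T) ∩ Δ_b((T_n)), and λ_n → λ. Then M := limsup ‖(T_n − λ_n)^{-1}‖ = limsup ‖(T_n − λ)^{-1}‖ ≥ ‖(T − λ)^{-1}‖, and if the inequality is strict then λ belongs to Λ_{ess,1/M}((T_n)) ∩ (Λ_{ess,1/M}((T_n*)))*. -/
open Filter Topology

noncomputable section

variable {H₀ : Type} [NormedAddCommGroup H₀] [InnerProductSpace ℂ H₀] [CompleteSpace H₀]

/-! ### Auxiliary lemmas -/

section Aux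
set_option linter.unusedSectionVars false

variable {K dm : Submodule ℂ H₀} {P : H₀ →L[ℂ] H₀}

lemma orthProj_eq_self (hP : IsOrthProj K P) {x : H₀} (hx : x ∈ K) : P x = x := by
  have h1 : P x - x ∈ K ⊓ Kᗮ :=
    ⟨sub_mem (hP x).1 hx, by simpa [neg_sub] using neg_mem (hP x).2⟩
  rw [Submodule.inf_orthogonal_eq_bot, Submodule.mem_bot] at h1
  exact sub_eq_zero.mp h1

lemma orthProj_eq_zero (hP : IsOrthProj K P) {x : H₀} (hx : x ∈ Kᗮ) : P x = 0 := by
  have h2 : x - (x - P x) ∈ Kᗮ := sub_mem hx (hP x).2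
  rw [sub_sub_cancel] at h2
  have h1 : P x ∈ K ⊓ Kᗮ := ⟨(hP x).1, h2⟩
  rw [Submodule.inf_orthogonal_eq_bot, Submodule.mem_bot] at h1
  exact h1

lemma orthProj_norm_le (hP : IsOrthProj K P) (x : H₀) : ‖P x‖ ≤ ‖x‖ := by
  have h0 : (inner ℂ (P x) (x - P x) : ℂ) = 0 :=
    Submodule.inner_right_of_mem_orthogonal (hP x).1 (hP x).2
  have h1 : ‖P x + (x - P x)‖ ^ 2 = ‖P x‖ ^ 2 + 2 * RCLike.re (inner ℂ (P x) (x - P x) : ℂ)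
      + ‖x - P x‖ ^ 2 := norm_add_sq _ _
  rw [add_sub_cancel, h0] at h1
  simp only [map_zero, mul_zero, add_zero] at h1
  nlinarith [norm_nonneg (P x), norm_nonneg x, sq_nonneg ‖x - P x‖]

variable {T : H₀ →ₗ[ℂ] H₀} {lam : ℂ} {R : H₀ →L[ℂ] H₀}

lemma res_proj (hR : InResolvent K dm T lam R) (hP : IsOrthProj K P) (y : H₀) :
    R y = R (P y) := by
  have h2 : R (y - P y) = 0 := hR.2.2 _ (hP y).2
  have h3 : R y = R (P y) + R (y - P y) := by rw [← map_add]; congr 1; abel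
  rw [h3, h2, add_zero]

lemma res_mem_dom (hR : InResolvent K dm T lam R) (hP : IsOrthProj K P) (y : H₀) :
    R y ∈ dm := by
  rw [res_proj hR hP y]
  exact (hR.1 _ (hP y).1).1

/-- Strong resolvent convergence at one point propagates to any point of
`ρ(T) ∩ Δ_b((Tₙ))`. -/
lemma strong_res_conv
    (Hsp dom : Submodule ℂ H₀) (T : H₀ →ₗ[ℂ] H₀)
    (hdom : dom ≤ Hsp) (hTin : ∀ x ∈ dom, T x ∈ Hsp)
    (Hn domn : ℕ → Submodule ℂ H₀) (Tn : ℕ → H₀ →ₗ[ℂ] H₀)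
    (P : H₀ →L[ℂ] H₀) (Pn : ℕ → H₀ →L[ℂ] H₀)
    (hP : IsOrthProj Hsp P) (hPn : ∀ n, IsOrthProj (Hn n) (Pn n))
    (hPconv : ∀ y : H₀, Tendsto (fun n => Pn n y) atTop (nhds (P y)))
    (m : ℕ) (lam₀ : ℂ) (R₀ : H₀ →L[ℂ] H₀) (Rn₀ : ℕ → H₀ →L[ℂ] H₀)
    (hR₀ : InResolvent Hsp dom T lam₀ R₀)
    (hRn₀ : ∀ n, n ≥ m → InResolvent (Hn n) (domn n) (Tn n) lam₀ (Rn₀ n))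
    (hconv₀ : ∀ y : H₀, Tendsto (fun n => Rn₀ n y) atTop (nhds (R₀ y)))
    (lam : ℂ) (Rlam : H₀ →L[ℂ] H₀) (hRlam : InResolvent Hsp dom T lam Rlam)
    (m' : ℕ) (C : ℝ) (Rn : ℕ → H₀ →L[ℂ] H₀)
    (hRn : ∀ n, n ≥ m' → InResolvent (Hn n) (domn n) (Tn n) lam (Rn n) ∧ ‖Rn n‖ ≤ C) :
    ∀ y : H₀, Tendsto (fun n => Rn n y) atTop (nhds (Rlam y)) := by
  have key : ∀ y ∈ Hsp, Tendsto (fun n => Rn n y) atTop (nhds (Rlam y)) := by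
    intro y hy
    obtain ⟨hxdom, hxeq⟩ := hRlam.1 y hy
    set x := Rlam y with hxdef
    set w := T x - lam₀ • x with hwdef
    have hwH : w ∈ Hsp := sub_mem (hTin x hxdom) (Submodule.smul_mem _ _ (hdom hxdom))
    set xn : ℕ → H₀ := fun n => Rn₀ n (Pn n w) with hxndef
    have hxnmem : ∀ n, n ≥ m → xn n ∈ domn n := fun n hn =>
      ((hRn₀ n hn).1 _ ((hPn n) w).1).1
    have hxneq : ∀ n, n ≥ m → Tn n (xn n) - lam₀ • xn n = Pn n w := fun n hn =>
      ((hRn₀ n hn).1 _ ((hPn n) w).1).2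
    have hxnconv : Tendsto xn atTop (nhds x) := by
      have h1 : (fun n => Rn₀ n w) =ᶠ[atTop] xn :=
        eventually_atTop.2 ⟨m, fun n hn => res_proj (hRn₀ n hn) (hPn n) w⟩
      have h3 : R₀ w = x := hR₀.2.1 x hxdom
      exact h3 ▸ (hconv₀ w).congr' h1
    set en : ℕ → H₀ := fun n => y - (Tn n (xn n) - lam • xn n) with hendef
    have hen : Tendsto en atTop (nhds 0) := by
      have h1 : Tendsto (fun n => y - Pn n w - (lam₀ - lam) • xn n) atTop
          (nhds (y - P w - (lam₀ - lam) • x)) :=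
        (tendsto_const_nhds.sub (hPconv w)).sub (hxnconv.const_smul _)
      have h2 : y - P w - (lam₀ - lam) • x = 0 := by
        rw [orthProj_eq_self hP hwH, hwdef, ← hxeq]
        module
      have h4 : (fun n => y - Pn n w - (lam₀ - lam) • xn n) =ᶠ[atTop] en := by
        refine eventually_atTop.2 ⟨m, fun n hn => ?_⟩
        show y - Pn n w - (lam₀ - lam) • xn n = y - (Tn n (xn n) - lam • xn n)
        rw [← hxneq n hn]
        module
      exact h2 ▸ h1.congr' h4
    have h6 : Tendsto (fun n => Rn n (en n)) atTop (nhds 0) := by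
      have hgg : Tendsto (fun n => C * ‖en n‖) atTop (nhds 0) := by
        simpa using (hen.norm).const_mul C
      refine squeeze_zero_norm' ?_ hgg
      refine eventually_atTop.2 ⟨m', fun n hn => ?_⟩
      calc ‖Rn n (en n)‖ ≤ ‖Rn n‖ * ‖en n‖ := (Rn n).le_opNorm _
        _ ≤ C * ‖en n‖ := mul_le_mul_of_nonneg_right (hRn n hn).2 (norm_nonneg _)
    have hfinal : (fun n => Rn n (en n) + xn n) =ᶠ[atTop] fun n => Rn n y := by
      refine eventually_atTop.2 ⟨max m m', fun n hn => ?_⟩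
      have hm : n ≥ m := le_trans (le_max_left _ _) hn
      have hm' : n ≥ m' := le_trans (le_max_right _ _) hn
      have h5 : Rn n (Tn n (xn n) - lam • xn n) = xn n :=
        (hRn n hm').1.2.1 _ (hxnmem n hm)
      calc Rn n (en n) + xn n
          = Rn n (en n) + Rn n (Tn n (xn n) - lam • xn n) := by rw [h5]
        _ = Rn n (en n + (Tn n (xn n) - lam • xn n)) := (map_add _ _ _).symm
        _ = Rn n y := by
            congr 1
            show y - (Tn n (xn n) - lam • xn n) + (Tn n (xn n) - lam • xn n) = y
            abel
    have h7 : Tendsto (fun n => Rn n (en n) + xn n) atTop (nhds x) := by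
      simpa using h6.add hxnconv
    exact h7.congr' hfinal
  have side : ∀ y ∈ Hspᗮ, Tendsto (fun n => Rn n y) atTop (nhds 0) := by
    intro y hy
    have hb : ∀ᶠ n in atTop, ‖Rn n y‖ ≤ C * ‖Pn n y‖ := by
      refine eventually_atTop.2 ⟨m', fun n hn => ?_⟩
      rw [res_proj (hRn n hn).1 (hPn n) y]
      calc ‖Rn n (Pn n y)‖ ≤ ‖Rn n‖ * ‖Pn n y‖ := (Rn n).le_opNorm _
        _ ≤ C * ‖Pn n y‖ := mul_le_mul_of_nonneg_right (hRn n hn).2 (norm_nonneg _)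
    have hg : Tendsto (fun n => C * ‖Pn n y‖) atTop (nhds 0) := by
      have h8 := (hPconv y).norm
      rw [orthProj_eq_zero hP hy] at h8
      simpa using h8.const_mul C
    exact squeeze_zero_norm' hb hg
  intro y
  have h1 := key (P y) (hP y).1
  have h2 := side (y - P y) (hP y).2
  have h3 : Tendsto (fun n => Rn n (P y) + Rn n (y - P y)) atTop (nhds (Rlam (P y))) := by
    simpa using h1.add h2
  have h4 : (fun n => Rn n (P y) + Rn n (y - P y)) = fun n => Rn n y := by
    funext n; rw [← map_add]; congr 1; abel
  have h5 : Rlam (P y) = Rlam y := (res_proj hRlam hP y).symm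
  rw [h4, h5] at h3
  exact h3


/-- Perturbation of the resolvent: from `lam ∈ ρ(Tₙ)` to nearby `μ`. -/
lemma res_shift (hdm : dm ≤ K) (hR : InResolvent K dm T lam R) (hP : IsOrthProj K P)
    {μ : ℂ} (h : ‖(μ - lam) • R‖ < 1) :
    InResolvent K dm T μ (R * ↑(Units.oneSub ((μ - lam) • R) h)⁻¹) ∧
      (‖(μ - lam) • R‖ ≤ 1/2 →
        ‖R * ↑(Units.oneSub ((μ - lam) • R) h)⁻¹ - R‖ ≤ 2 * ‖R‖ * ‖(μ - lam) • R‖) := by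
  set t : H₀ →L[ℂ] H₀ := (μ - lam) • R with htdef
  set u : H₀ →L[ℂ] H₀ := ↑(Units.oneSub t h)⁻¹ with hudef
  have hval : ((Units.oneSub t h : (H₀ →L[ℂ] H₀)ˣ) : H₀ →L[ℂ] H₀) = 1 - t := rfl
  have hu1 : (1 - t) * u = 1 := by rw [← hval, hudef]; exact (Units.oneSub t h).mul_inv
  have hu2 : u * (1 - t) = 1 := by rw [← hval, hudef]; exact (Units.oneSub t h).inv_mul
  have hcommt : R * (1 - t) = (1 - t) * R := by
    rw [htdef]
    simp only [mul_sub, sub_mul, mul_one, one_mul, smul_mul_assoc, mul_smul_comm]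
  have hcomm : R * u = u * R := by
    calc R * u = (u * (1 - t)) * (R * u) := by rw [hu2, one_mul]
      _ = u * ((1 - t) * R * u) := by simp only [mul_assoc]
      _ = u * (R * (1 - t) * u) := by rw [hcommt]
      _ = (u * R) * ((1 - t) * u) := by simp only [mul_assoc]
      _ = u * R := by rw [hu1, mul_one]
  have hueq : u = 1 + t * u := by
    have h9 := hu1
    rw [sub_mul, one_mul] at h9
    exact eq_add_of_sub_eq h9
  constructor
  · refine ⟨?_, ?_, ?_⟩
    · intro y hy
      set v := R (u y) with hv
      have hz : u y = y + (μ - lam) • v := by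
        conv_lhs => rw [hueq]
        rw [hv]
        simp only [ContinuousLinearMap.add_apply, ContinuousLinearMap.one_apply,
          ContinuousLinearMap.mul_apply, htdef, ContinuousLinearMap.smul_apply]
      have hvdm : v ∈ dm := res_mem_dom hR hP _
      have hzK : u y ∈ K := by
        rw [hz]; exact add_mem hy (Submodule.smul_mem _ _ (hdm hvdm))
      obtain ⟨hmem, heq⟩ := hR.1 (u y) hzK
      constructor
      · show R (u y) ∈ dm
        exact hmem
      · show T (R (u y)) - μ • (R (u y)) = y
        rw [← hv]
        calc T v - μ • v = (T v - lam • v) - (μ - lam) • v := by module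
          _ = u y - (μ - lam) • v := by rw [← hv] at heq; rw [heq]
          _ = y := by rw [hz]; abel
    · intro x hx
      show (R * u) (T x - μ • x) = x
      rw [hcomm, ContinuousLinearMap.mul_apply]
      have h2 : R (T x - μ • x) = x - (μ - lam) • (R x) := by
        have h3 : T x - μ • x = (T x - lam • x) - (μ - lam) • x := by module
        rw [h3, map_sub, hR.2.1 x hx, map_smul]
      rw [h2]
      have h4 : x - (μ - lam) • (R x) = (1 - t) x := by
        simp only [htdef, ContinuousLinearMap.sub_apply, ContinuousLinearMap.one_apply,
          ContinuousLinearMap.smul_apply]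
      rw [h4, ← ContinuousLinearMap.mul_apply, hu2, ContinuousLinearMap.one_apply]
    · intro y hy
      show (R * u) y = 0
      rw [hcomm, ContinuousLinearMap.mul_apply, hR.2.2 y hy, map_zero]
  · intro h2
    rw [← htdef] at h2
    have hnorm1 : ‖(1 : H₀ →L[ℂ] H₀)‖ ≤ 1 := by
      rw [ContinuousLinearMap.one_def]; exact ContinuousLinearMap.norm_id_le
    have hu_le : ‖u‖ ≤ 1 + ‖t‖ * ‖u‖ := by
      calc ‖u‖ = ‖1 + t * u‖ := by rw [← hueq]
        _ ≤ ‖(1 : H₀ →L[ℂ] H₀)‖ + ‖t * u‖ := norm_add_le _ _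
        _ ≤ 1 + ‖t‖ * ‖u‖ := add_le_add hnorm1 (norm_mul_le _ _)
    have hu2' : ‖u‖ ≤ 2 := by nlinarith [norm_nonneg u]
    have hdiff : R * u - R = R * (t * u) := by
      have h5 : u - 1 = t * u := sub_eq_iff_eq_add'.mpr hueq
      calc R * u - R = R * (u - 1) := by rw [mul_sub, mul_one]
        _ = R * (t * u) := by rw [h5]
    rw [hdiff]
    calc ‖R * (t * u)‖ ≤ ‖R‖ * ‖t * u‖ := norm_mul_le _ _
      _ ≤ ‖R‖ * (‖t‖ * ‖u‖) :=
          mul_le_mul_of_nonneg_left (norm_mul_le _ _) (norm_nonneg _)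
      _ ≤ ‖R‖ * (‖t‖ * 2) := by
          have h7 := mul_le_mul_of_nonneg_left hu2' (norm_nonneg t)
          exact mul_le_mul_of_nonneg_left h7 (norm_nonneg R)
      _ = 2 * ‖R‖ * ‖t‖ := by ring

/-- If `S` (with domain `domS`) has a resolvent, then it maps its domain into `Hsp`. -/
lemma adjS_in {Hsp domS : Submodule ℂ H₀} {S : H₀ →ₗ[ℂ] H₀} (hdomS : domS ≤ Hsp)
    {μ : ℂ} {R' P : H₀ →L[ℂ] H₀} (hR' : InResolvent Hsp domS S μ R')
    (hP : IsOrthProj Hsp P) : ∀ y ∈ domS, S y ∈ Hsp := by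
  intro y hy
  have h1 : R' (S y - μ • y) = y := hR'.2.1 y hy
  have h2 : R' (S y - μ • y) = R' (P (S y - μ • y)) := res_proj hR' hP _
  have hy_eq : y = R' (P (S y - μ • y)) := by rw [← h2, h1]
  have h3 := (hR'.1 _ (hP (S y - μ • y)).1).2
  rw [← hy_eq] at h3
  have h4 : S y = P (S y - μ • y) + μ • y := by
    rw [← h3]; abel
  rw [h4]
  exact add_mem (hP _).1 (Submodule.smul_mem _ _ (hdomS hy))

/-- The adjoint of the resolvent is the resolvent of the adjoint. -/
lemma adjoint_res {Hsp dm : Submodule ℂ H₀} (hHcl : IsClosed ((Hsp : Set H₀)))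
    {T : H₀ →ₗ[ℂ] H₀} (hdm : dm ≤ Hsp) (hTin : ∀ x ∈ dm, T x ∈ Hsp)
    {domS : Submodule ℂ H₀} {S : H₀ →ₗ[ℂ] H₀}
    (hadj : IsAdjointOp Hsp dm T domS S)
    (hSin : ∀ y ∈ domS, S y ∈ Hsp)
    {lam : ℂ} {R : H₀ →L[ℂ] H₀} (hR : InResolvent Hsp dm T lam R)
    (P : H₀ →L[ℂ] H₀) (hP : IsOrthProj Hsp P) :
    InResolvent Hsp domS S ((starRingEnd ℂ) lam) (ContinuousLinearMap.adjoint R) := by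
  haveI : CompleteSpace Hsp := hHcl.completeSpace_coe
  set R' : H₀ →L[ℂ] H₀ := ContinuousLinearMap.adjoint R with hR'def
  have hbot : ∀ v ∈ Hspᗮ, R' v = 0 := by
    intro v hv
    refine ext_inner_right ℂ fun z => ?_
    rw [hR'def, ContinuousLinearMap.adjoint_inner_left]
    have hRz : R z ∈ Hsp := hdm (res_mem_dom hR hP z)
    rw [Submodule.inner_left_of_mem_orthogonal hRz hv]
    simp
  have hR'in : ∀ y : H₀, R' y ∈ Hsp := by
    intro y
    rw [← Submodule.orthogonal_orthogonal Hsp]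
    rw [Submodule.mem_orthogonal]
    intro v hv
    have h1 : (inner ℂ (R' y) v : ℂ) = 0 := by
      rw [hR'def, ContinuousLinearMap.adjoint_inner_left, hR.2.2 v hv]
      simp
    rw [← inner_conj_symm, h1, map_zero]
  refine ⟨?_, ?_, hbot⟩
  · intro y hy
    have hw : R' y ∈ Hsp := hR'in y
    have hpair : ∀ x ∈ dm, (inner ℂ (T x) (R' y) : ℂ) = inner ℂ x (y + (starRingEnd ℂ) lam • R' y) := by
      intro x hx
      rw [hR'def, ContinuousLinearMap.adjoint_inner_right]
      have h1 : R (T x) = x + lam • R x := by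
        have h3 : T x = (T x - lam • x) + lam • x := by abel
        rw [h3, map_add, hR.2.1 x hx, map_smul]
      rw [h1, inner_add_left, inner_smul_left, inner_add_right, inner_smul_right,
        ContinuousLinearMap.adjoint_inner_right]
    have h2 := (hadj.2 (R' y) hw (y + (starRingEnd ℂ) lam • R' y)
      (add_mem hy (Submodule.smul_mem _ _ hw))).mpr hpair
    exact ⟨h2.1, by rw [h2.2]; abel⟩
  · intro y hy
    have hy' : y ∈ Hsp := hadj.1 hy
    have hpair : ∀ x ∈ dm, (inner ℂ (T x) y : ℂ) = inner ℂ x (S y) :=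
      (hadj.2 y hy' (S y) (hSin y hy)).mp ⟨hy, rfl⟩
    refine ext_inner_right ℂ fun v => ?_
    rw [hR'def, ContinuousLinearMap.adjoint_inner_left]
    set x := R v with hxdef
    have hxdm : x ∈ dm := res_mem_dom hR hP v
    have hTx : T x - lam • x = P v := by
      rw [hxdef, res_proj hR hP v]
      exact (hR.1 _ (hP v).1).2
    have h5 : (inner ℂ x (S y - (starRingEnd ℂ) lam • y) : ℂ) = inner ℂ (P v) y := by
      rw [inner_sub_right, inner_smul_right, ← hpair x hxdm, ← hTx, inner_sub_left,
        inner_smul_left]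
    have h8 : (inner ℂ (S y - (starRingEnd ℂ) lam • y) x : ℂ) = inner ℂ y (P v) := by
      rw [← inner_conj_symm, ← inner_conj_symm y, h5]
    rw [h8]
    have h6 : (inner ℂ y (v - P v) : ℂ) = 0 :=
      Submodule.inner_right_of_mem_orthogonal hy' (hP v).2
    rw [inner_sub_right] at h6
    exact (sub_eq_zero.mp h6).symm


lemma limsup_eq_of_sub_tendsto {f g : ℕ → ℝ} {c : ℝ}
    (hfg : Tendsto (fun n => f n - g n) atTop (nhds 0))
    (hf : ∀ᶠ n in atTop, |f n| ≤ c) (hg : ∀ᶠ n in atTop, |g n| ≤ c) :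
    limsup f atTop = limsup g atTop := by
  have key : ∀ f g : ℕ → ℝ, Tendsto (fun n => f n - g n) atTop (nhds 0) →
      (∀ᶠ n in atTop, |f n| ≤ c) → (∀ᶠ n in atTop, |g n| ≤ c) →
      limsup f atTop ≤ limsup g atTop := by
    intro f g hfg hf hg
    refine le_of_forall_pos_le_add fun ε hε => ?_
    have h1 : ∀ᶠ n in atTop, f n ≤ g n + ε := by
      filter_upwards [hfg.eventually_lt_const hε] with n hn
      linarith
    have hfc : IsCoboundedUnder (· ≤ ·) atTop f :=
      isCoboundedUnder_le_of_eventually_le atTop (x := -c)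
        (hf.mono fun n hn => (abs_le.mp hn).1)
    have hgb : IsBoundedUnder (· ≤ ·) atTop (fun n => g n + ε) :=
      isBoundedUnder_of_eventually_le (a := c + ε)
        (hg.mono fun n hn => by linarith [(abs_le.mp hn).2])
    calc limsup f atTop ≤ limsup (fun n => g n + ε) atTop := limsup_le_limsup h1 hfc hgb
      _ = limsup g atTop + ε :=
          limsup_add_const atTop g ε
            (isBoundedUnder_of_eventually_le (a := c) (hg.mono fun n hn => (abs_le.mp hn).2))
            (isCoboundedUnder_le_of_eventually_le atTop (x := -c)
              (hg.mono fun n hn => (abs_le.mp hn).1))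
  have h2 : Tendsto (fun n => g n - f n) atTop (nhds 0) := by
    have := hfg.neg
    simp only [neg_sub, neg_zero] at this
    exact this
  exact le_antisymm (key f g hfg hf hg) (key g f h2 hg hf)

/-- Bounded sequences in a separable Hilbert space have weakly convergent subsequences. -/
lemma exists_weak_subseq [TopologicalSpace.SeparableSpace H₀] (x : ℕ → H₀) (c : ℝ)
    (hx : ∀ k, ‖x k‖ ≤ c) :
    ∃ (ψ : ℕ → ℕ) (z : H₀), StrictMono ψ ∧ WeakTendsto (fun k => x (ψ k)) z := by
  obtain ⟨D, hD⟩ := TopologicalSpace.exists_dense_seq H₀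
  set F : ℕ → ℕ → ℂ := fun k i => (inner ℂ (x k) (D i) : ℂ) with hF
  have hmem : ∀ k, F k ∈ Set.pi Set.univ (fun i => Metric.closedBall (0:ℂ) (c * ‖D i‖)) := by
    intro k i _
    rw [Metric.mem_closedBall, dist_zero_right]
    calc ‖(inner ℂ (x k) (D i) : ℂ)‖ ≤ ‖x k‖ * ‖D i‖ := norm_inner_le_norm _ _
      _ ≤ c * ‖D i‖ := mul_le_mul_of_nonneg_right (hx k) (norm_nonneg _)
  have hcomp : IsCompact (Set.pi Set.univ fun i => Metric.closedBall (0:ℂ) (c * ‖D i‖)) :=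
    isCompact_univ_pi fun i => isCompact_closedBall _ _
  obtain ⟨f, -, ψ, hψ, hconv⟩ := hcomp.isSeqCompact hmem
  have hcoord : ∀ i, Tendsto (fun k => (inner ℂ (x (ψ k)) (D i) : ℂ)) atTop (nhds (f i)) :=
    fun i => tendsto_pi_nhds.1 hconv i
  have hcauchy : ∀ y : H₀, ∃ L : ℂ,
      Tendsto (fun k => (inner ℂ (x (ψ k)) y : ℂ)) atTop (nhds L) := by
    intro y
    have hcs : CauchySeq (fun k => (inner ℂ (x (ψ k)) y : ℂ)) := by
      rw [Metric.cauchySeq_iff]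
      intro ε hε
      have hc1 : (0:ℝ) < c + 1 := lt_of_le_of_lt (norm_nonneg (x 0)) (by linarith [hx 0])
      obtain ⟨i, hi⟩ := Metric.denseRange_iff.1 hD y (ε / 4 / (c + 1)) (by positivity)
      have hicauchy := (hcoord i).cauchySeq
      rw [Metric.cauchySeq_iff] at hicauchy
      obtain ⟨N, hN⟩ := hicauchy (ε / 2) (by linarith)
      refine ⟨N, fun a ha b hb => ?_⟩
      have hkey : ∀ k, dist (inner ℂ (x (ψ k)) y : ℂ) (inner ℂ (x (ψ k)) (D i) : ℂ) ≤ ε / 4 := by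
        intro k
        rw [dist_eq_norm, ← inner_sub_right]
        calc ‖(inner ℂ (x (ψ k)) (y - D i) : ℂ)‖ ≤ ‖x (ψ k)‖ * ‖y - D i‖ :=
              norm_inner_le_norm _ _
          _ ≤ (c + 1) * (ε / 4 / (c + 1)) := by
              refine mul_le_mul (by linarith [hx (ψ k)]) ?_ (norm_nonneg _) (by linarith)
              rw [← dist_eq_norm]
              exact hi.le
          _ = ε / 4 := by field_simp
      calc dist (inner ℂ (x (ψ a)) y : ℂ) (inner ℂ (x (ψ b)) y : ℂ)
          ≤ dist (inner ℂ (x (ψ a)) y : ℂ) (inner ℂ (x (ψ a)) (D i) : ℂ)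
            + dist (inner ℂ (x (ψ a)) (D i) : ℂ) (inner ℂ (x (ψ b)) (D i) : ℂ)
            + dist (inner ℂ (x (ψ b)) (D i) : ℂ) (inner ℂ (x (ψ b)) y : ℂ) :=
            dist_triangle4 _ _ _ _
        _ < ε := by
            have h1 := hkey a
            have h2 := hN a ha b hb
            have h3 := hkey b
            rw [dist_comm] at h3
            linarith
    exact cauchySeq_tendsto_of_complete hcs
  choose g hg using hcauchy
  have hadd : ∀ y z : H₀, g (y + z) = g y + g z := fun y z =>
    tendsto_nhds_unique (hg (y + z))
      (by simpa only [← inner_add_right] using (hg y).add (hg z))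
  have hsmul : ∀ (a : ℂ) (y : H₀), g (a • y) = a * g y := fun a y =>
    tendsto_nhds_unique (hg (a • y))
      (by simpa only [← inner_smul_right] using (hg y).const_mul a)
  have hbound : ∀ y, ‖g y‖ ≤ c * ‖y‖ := by
    intro y
    refine le_of_tendsto (hg y).norm (Eventually.of_forall fun k => ?_)
    calc ‖(inner ℂ (x (ψ k)) y : ℂ)‖ ≤ ‖x (ψ k)‖ * ‖y‖ := norm_inner_le_norm _ _
      _ ≤ c * ‖y‖ := mul_le_mul_of_nonneg_right (hx _) (norm_nonneg _)
  let Lmap : H₀ →ₗ[ℂ] ℂ :=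
    { toFun := g, map_add' := hadd, map_smul' := hsmul }
  let Lc : H₀ →L[ℂ] ℂ := LinearMap.mkContinuous Lmap c hbound
  refine ⟨ψ, (InnerProductSpace.toDual ℂ H₀).symm Lc, hψ, fun y => ?_⟩
  have h1 : (inner ℂ ((InnerProductSpace.toDual ℂ H₀).symm Lc) y : ℂ) = Lc y :=
    InnerProductSpace.toDual_symm_apply
  have h2 : Tendsto (fun k => (inner ℂ (x (ψ k)) y : ℂ) - g y) atTop (nhds 0) := by
    simpa using (hg y).sub (tendsto_const_nhds (x := g y))
  refine h2.congr fun k => ?_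
  rw [inner_sub_left, h1]
  rfl


set_option maxHeartbeats 1000000 in
/-- Construction of the singular sequence attaining the limiting essential `1/M`-near
spectrum. -/
lemma singular_seq [TopologicalSpace.SeparableSpace H₀]
    (Hn domn : ℕ → Submodule ℂ H₀) (Tn : ℕ → H₀ →ₗ[ℂ] H₀)
    (Pn : ℕ → H₀ →L[ℂ] H₀) (hPn : ∀ n, IsOrthProj (Hn n) (Pn n))
    (lam : ℂ) (Rn : ℕ → H₀ →L[ℂ] H₀) (Rlam : H₀ →L[ℂ] H₀)
    (hconvR : ∀ y : H₀, Tendsto (fun n => Rn n y) atTop (nhds (Rlam y)))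
    (hadjconv : ∀ z : H₀, Tendsto (fun n => ContinuousLinearMap.adjoint (Rn n) z) atTop
      (nhds (ContinuousLinearMap.adjoint Rlam z)))
    (M : ℝ) (hlt : ‖Rlam‖ < M)
    (φ : ℕ → ℕ) (hφ : StrictMono φ)
    (hres : ∀ k, InResolvent (Hn (φ k)) (domn (φ k)) (Tn (φ k)) lam (Rn (φ k)))
    (hnorm : Tendsto (fun k => ‖Rn (φ k)‖) atTop (nhds M)) :
    LimEssNear domn Tn M⁻¹ lam := by
  have hM0 : 0 < M := lt_of_le_of_lt (norm_nonneg _) hlt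
  have hex : ∀ k : ℕ, ∃ u : H₀, ‖u‖ ≤ 1 ∧ u ∈ Hn (φ k) ∧
      ‖Rn (φ k)‖ - 1/(k+1) ≤ ‖Rn (φ k) u‖ := by
    intro k
    rcases le_or_gt (‖Rn (φ k)‖ - 1/(k+1)) 0 with h | h
    · exact ⟨0, by simp, Submodule.zero_mem _, by simpa using h⟩
    · obtain ⟨y, hy1, hy2⟩ := (Rn (φ k)).exists_lt_apply_of_lt_opNorm
        (show ‖Rn (φ k)‖ - 1/(k+1) < ‖Rn (φ k)‖ by
          have h9 : (0:ℝ) < 1/((k:ℝ)+1) := by positivity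
          linarith)
      refine ⟨Pn (φ k) y, le_trans (orthProj_norm_le (hPn _) y) hy1.le, ((hPn (φ k)) y).1, ?_⟩
      rw [← res_proj (hres k) (hPn _) y]
      exact hy2.le
  choose u hu1 hu2 hu3 using hex
  have hone : Tendsto (fun k : ℕ => 1/((k:ℝ)+1)) atTop (nhds 0) :=
    tendsto_one_div_add_atTop_nhds_zero_nat
  have hRu : Tendsto (fun k => ‖Rn (φ k) (u k)‖) atTop (nhds M) := by
    have hlow2 : Tendsto (fun k => ‖Rn (φ k)‖ - 1/((k:ℝ)+1)) atTop (nhds M) := by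
      have h9 := hnorm.sub hone
      rw [sub_zero] at h9
      exact h9
    refine tendsto_of_tendsto_of_tendsto_of_le_of_le hlow2 hnorm hu3 ?_
    intro k
    calc ‖Rn (φ k) (u k)‖ ≤ ‖Rn (φ k)‖ * ‖u k‖ := (Rn (φ k)).le_opNorm _
      _ ≤ ‖Rn (φ k)‖ := mul_le_of_le_one_right (norm_nonneg _) (hu1 k)
  have hu_norm : Tendsto (fun k => ‖u k‖) atTop (nhds 1) := by
    have hlow : Tendsto (fun k => ‖Rn (φ k) (u k)‖ / ‖Rn (φ k)‖) atTop (nhds (M / M)) :=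
      hRu.div hnorm (ne_of_gt hM0)
    rw [div_self (ne_of_gt hM0)] at hlow
    refine tendsto_of_tendsto_of_tendsto_of_le_of_le' hlow tendsto_const_nhds ?_
      (Eventually.of_forall hu1)
    filter_upwards [hnorm.eventually_const_lt hM0] with k hk
    rw [div_le_iff₀ hk]
    calc ‖Rn (φ k) (u k)‖ ≤ ‖Rn (φ k)‖ * ‖u k‖ := (Rn (φ k)).le_opNorm _
      _ = ‖u k‖ * ‖Rn (φ k)‖ := mul_comm _ _
  obtain ⟨ψ, uL, hψ, hweak⟩ := exists_weak_subseq u 1 hu1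
  set n' : ℕ → ℕ := fun j => φ (ψ j) with hn'
  have hmono : StrictMono n' := hφ.comp hψ
  have hψt : Tendsto ψ atTop atTop := hψ.tendsto_atTop
  have hn't : Tendsto n' atTop atTop := hmono.tendsto_atTop
  have hnorm' : Tendsto (fun j => ‖Rn (n' j)‖) atTop (nhds M) := hnorm.comp hψt
  have hRu' : Tendsto (fun j => ‖Rn (n' j) (u (ψ j))‖) atTop (nhds M) := hRu.comp hψt
  have hun' : Tendsto (fun j => ‖u (ψ j)‖) atTop (nhds 1) := hu_norm.comp hψt
  have hinner_uL : Tendsto (fun j => (inner ℂ (u (ψ j)) uL : ℂ)) atTop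
      (nhds ((‖uL‖^2 : ℝ) : ℂ)) := by
    have h1 : Tendsto (fun j => (inner ℂ (u (ψ j) - uL) uL : ℂ)) atTop (nhds 0) := hweak uL
    have h2 := h1.add (tendsto_const_nhds (x := (inner ℂ uL uL : ℂ)))
    rw [zero_add] at h2
    have h3 : (inner ℂ uL uL : ℂ) = ((‖uL‖^2 : ℝ) : ℂ) := by
      rw [inner_self_eq_norm_sq_to_K]; norm_cast
    rw [h3] at h2
    refine h2.congr fun j => ?_
    rw [inner_sub_left, ← h3]
    ring
  have huL1 : ‖uL‖ ≤ 1 := by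
    have h4 := hinner_uL.norm
    have h5 : ‖(((‖uL‖^2 : ℝ)) : ℂ)‖ = ‖uL‖^2 := by
      rw [Complex.norm_real, Real.norm_eq_abs]
      exact abs_of_nonneg (sq_nonneg _)
    rw [h5] at h4
    have h6 : ‖uL‖^2 ≤ ‖uL‖ := by
      refine le_of_tendsto h4 (Eventually.of_forall fun j => ?_)
      calc ‖(inner ℂ (u (ψ j)) uL : ℂ)‖ ≤ ‖u (ψ j)‖ * ‖uL‖ := norm_inner_le_norm _ _
        _ ≤ ‖uL‖ := mul_le_of_le_one_left (norm_nonneg _) (hu1 _)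
    nlinarith [norm_nonneg uL]
  set w : ℕ → H₀ := fun j => u (ψ j) - uL with hwdef
  have hw2 : ∀ j, ‖w j‖ ≤ 2 := fun j => by
    calc ‖w j‖ = ‖u (ψ j) - uL‖ := rfl
      _ ≤ ‖u (ψ j)‖ + ‖uL‖ := norm_sub_le _ _
      _ ≤ 2 := by linarith [hu1 (ψ j)]
  have hwsq : Tendsto (fun j => ‖w j‖^2) atTop (nhds (1 - ‖uL‖^2)) := by
    have h1 : ∀ j, ‖w j‖^2
        = ‖u (ψ j)‖^2 - 2 * RCLike.re (inner ℂ (u (ψ j)) uL : ℂ) + ‖uL‖^2 :=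
      fun j => norm_sub_sq _ _
    have h2 : Tendsto (fun j => RCLike.re (inner ℂ (u (ψ j)) uL : ℂ)) atTop
        (nhds (‖uL‖^2)) := by
      have h7 := (RCLike.continuous_re.tendsto (((‖uL‖^2:ℝ):ℂ))).comp hinner_uL
      simp only [Function.comp_def] at h7
      have h8 : RCLike.re (((‖uL‖^2:ℝ):ℂ)) = ‖uL‖^2 := by
        rw [RCLike.re_to_complex, Complex.ofReal_re]
      rw [h8] at h7
      exact h7
    have h3 := ((hun'.pow 2).sub (h2.const_mul 2)).add
      (tendsto_const_nhds (x := ‖uL‖^2))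
    have h4 : (1:ℝ)^2 - 2*‖uL‖^2 + ‖uL‖^2 = 1 - ‖uL‖^2 := by ring
    rw [h4] at h3
    exact h3.congr fun j => (h1 j).symm
  have hRw_weak : ∀ z : H₀,
      Tendsto (fun j => (inner ℂ (Rn (n' j) (w j)) z : ℂ)) atTop (nhds 0) := by
    intro z
    have h1 : ∀ j, (inner ℂ (Rn (n' j) (w j)) z : ℂ)
        = (inner ℂ (w j) (ContinuousLinearMap.adjoint Rlam z) : ℂ)
          + (inner ℂ (w j) (ContinuousLinearMap.adjoint (Rn (n' j)) z
              - ContinuousLinearMap.adjoint Rlam z) : ℂ) := by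
      intro j
      have e1 : ContinuousLinearMap.adjoint Rlam z
          + (ContinuousLinearMap.adjoint (Rn (n' j)) z - ContinuousLinearMap.adjoint Rlam z)
          = ContinuousLinearMap.adjoint (Rn (n' j)) z := by abel
      rw [← inner_add_right, e1, ContinuousLinearMap.adjoint_inner_right]
    have h2 : Tendsto (fun j => (inner ℂ (w j) (ContinuousLinearMap.adjoint Rlam z) : ℂ))
        atTop (nhds 0) := hweak _
    have h3 : Tendsto (fun j => (inner ℂ (w j) (ContinuousLinearMap.adjoint (Rn (n' j)) z
        - ContinuousLinearMap.adjoint Rlam z) : ℂ)) atTop (nhds 0) := by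
      have hg : Tendsto (fun j => 2 * ‖ContinuousLinearMap.adjoint (Rn (n' j)) z
          - ContinuousLinearMap.adjoint Rlam z‖) atTop (nhds 0) := by
        have h8 := (((hadjconv z).comp hn't).sub
          (tendsto_const_nhds (x := ContinuousLinearMap.adjoint Rlam z))).norm
        simpa using h8.const_mul 2
      refine squeeze_zero_norm (fun j => ?_) hg
      calc ‖(inner ℂ (w j) (ContinuousLinearMap.adjoint (Rn (n' j)) z
            - ContinuousLinearMap.adjoint Rlam z) : ℂ)‖
          ≤ ‖w j‖ * ‖ContinuousLinearMap.adjoint (Rn (n' j)) z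
            - ContinuousLinearMap.adjoint Rlam z‖ := norm_inner_le_norm _ _
        _ ≤ 2 * ‖ContinuousLinearMap.adjoint (Rn (n' j)) z
            - ContinuousLinearMap.adjoint Rlam z‖ :=
            mul_le_mul_of_nonneg_right (hw2 j) (norm_nonneg _)
    have h4 := h2.add h3
    rw [add_zero] at h4
    exact h4.congr fun j => (h1 j).symm
  have hRuL : Tendsto (fun j => Rn (n' j) uL) atTop (nhds (Rlam uL)) :=
    (hconvR uL).comp hn't
  have hcross : Tendsto (fun j => (inner ℂ (Rn (n' j) (w j)) (Rn (n' j) uL) : ℂ))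
      atTop (nhds 0) := by
    have h1 : ∀ j, (inner ℂ (Rn (n' j) (w j)) (Rn (n' j) uL) : ℂ)
        = inner ℂ (Rn (n' j) (w j)) (Rlam uL)
          + inner ℂ (Rn (n' j) (w j)) (Rn (n' j) uL - Rlam uL) := by
      intro j; rw [← inner_add_right]; congr 1; abel
    have h2 := hRw_weak (Rlam uL)
    have h3 : Tendsto (fun j => (inner ℂ (Rn (n' j) (w j)) (Rn (n' j) uL - Rlam uL) : ℂ))
        atTop (nhds 0) := by
      have hb : ∀ᶠ j in atTop, ‖(inner ℂ (Rn (n' j) (w j)) (Rn (n' j) uL - Rlam uL) : ℂ)‖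
          ≤ (2*(M+1)) * ‖Rn (n' j) uL - Rlam uL‖ := by
        filter_upwards [hnorm'.eventually_lt_const (show M < M + 1 by linarith)] with j hj
        calc ‖(inner ℂ (Rn (n' j) (w j)) (Rn (n' j) uL - Rlam uL) : ℂ)‖
            ≤ ‖Rn (n' j) (w j)‖ * ‖Rn (n' j) uL - Rlam uL‖ := norm_inner_le_norm _ _
          _ ≤ (2*(M+1)) * ‖Rn (n' j) uL - Rlam uL‖ := by
              refine mul_le_mul_of_nonneg_right ?_ (norm_nonneg _)
              calc ‖Rn (n' j) (w j)‖ ≤ ‖Rn (n' j)‖ * ‖w j‖ := (Rn (n' j)).le_opNorm _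
                _ ≤ (M+1) * 2 :=
                    mul_le_mul hj.le (hw2 j) (norm_nonneg _) (by linarith)
                _ = 2*(M+1) := by ring
      have hg : Tendsto (fun j => (2*(M+1)) * ‖Rn (n' j) uL - Rlam uL‖) atTop (nhds 0) := by
        have h9 := (hRuL.sub (tendsto_const_nhds (x := Rlam uL))).norm
        simpa using h9.const_mul (2*(M+1))
      exact squeeze_zero_norm' hb hg
    have h4 := h2.add h3
    rw [add_zero] at h4
    exact h4.congr fun j => (h1 j).symm
  have hRwsq : Tendsto (fun j => ‖Rn (n' j) (w j)‖^2) atTop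
      (nhds (M^2 - ‖Rlam uL‖^2)) := by
    have h1 : ∀ j, ‖Rn (n' j) (w j)‖^2
        = ‖Rn (n' j) (u (ψ j))‖^2
          - 2*RCLike.re (inner ℂ (Rn (n' j) (u (ψ j))) (Rn (n' j) uL) : ℂ)
          + ‖Rn (n' j) uL‖^2 := by
      intro j
      have e2 : Rn (n' j) (w j) = Rn (n' j) (u (ψ j)) - Rn (n' j) uL := by
        simp only [hwdef]; exact map_sub _ _ _
      rw [e2]; exact norm_sub_sq _ _
    have h2 : Tendsto (fun j => (inner ℂ (Rn (n' j) (u (ψ j))) (Rn (n' j) uL) : ℂ)) atTop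
        (nhds (inner ℂ (Rlam uL) (Rlam uL) : ℂ)) := by
      have ha : ∀ j, (inner ℂ (Rn (n' j) (u (ψ j))) (Rn (n' j) uL) : ℂ)
          = inner ℂ (Rn (n' j) (w j)) (Rn (n' j) uL)
            + inner ℂ (Rn (n' j) uL) (Rn (n' j) uL) := by
        intro j
        rw [← inner_add_left]
        congr 1
        have e2 : Rn (n' j) (w j) = Rn (n' j) (u (ψ j)) - Rn (n' j) uL := by
          simp only [hwdef]; exact map_sub _ _ _
        rw [e2]; abel
      have hb : Tendsto (fun j => (inner ℂ (Rn (n' j) uL) (Rn (n' j) uL) : ℂ)) atTop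
          (nhds (inner ℂ (Rlam uL) (Rlam uL) : ℂ)) := hRuL.inner hRuL
      have hc := hcross.add hb
      rw [zero_add] at hc
      exact hc.congr fun j => (ha j).symm
    have h3 : Tendsto (fun j => RCLike.re (inner ℂ (Rn (n' j) (u (ψ j))) (Rn (n' j) uL) : ℂ))
        atTop (nhds (‖Rlam uL‖^2)) := by
      have h7 := (RCLike.continuous_re.tendsto _).comp h2
      simpa [inner_self_eq_norm_sq, Function.comp_def, ← Complex.ofReal_pow] using h7
    have h4 := ((hRu'.pow 2).sub (h3.const_mul 2)).add ((hRuL.norm).pow 2)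
    have h5 : M^2 - 2*‖Rlam uL‖^2 + ‖Rlam uL‖^2 = M^2 - ‖Rlam uL‖^2 := by ring
    rw [h5] at h4
    exact h4.congr fun j => (h1 j).symm
  have huL0 : uL = 0 := by
    by_contra h0
    have ht0 : 0 < ‖uL‖ := norm_pos_iff.mpr h0
    have hineq : M^2 - ‖Rlam uL‖^2 ≤ M^2 * (1 - ‖uL‖^2) := by
      have hle : ∀ j, ‖Rn (n' j) (w j)‖^2 ≤ (‖Rn (n' j)‖ * ‖w j‖)^2 := by
        intro j
        have h9 := (Rn (n' j)).le_opNorm (w j)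
        nlinarith [norm_nonneg (Rn (n' j) (w j))]
      have hrhs : Tendsto (fun j => (‖Rn (n' j)‖ * ‖w j‖)^2) atTop
          (nhds (M^2 * (1 - ‖uL‖^2))) := by
        have h9 := (hnorm'.pow 2).mul hwsq
        refine h9.congr fun j => ?_
        ring
      exact le_of_tendsto_of_tendsto' hRwsq hrhs hle
    have hr : ‖Rlam uL‖ ≤ ‖Rlam‖ * ‖uL‖ := Rlam.le_opNorm _
    have hx1 : M^2 * ‖uL‖^2 ≤ ‖Rlam uL‖^2 := by nlinarith [hineq]
    have hx2 : ‖Rlam uL‖^2 ≤ (‖Rlam‖ * ‖uL‖)^2 := by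
      have h9 := mul_self_le_mul_self (norm_nonneg (Rlam uL)) hr
      nlinarith [h9]
    have hx3 : ‖Rlam‖^2 < M^2 := by nlinarith [norm_nonneg Rlam]
    have hx4 : ‖Rlam‖^2 * (‖uL‖*‖uL‖) < M^2 * (‖uL‖*‖uL‖) :=
      mul_lt_mul_of_pos_right hx3 (mul_pos ht0 ht0)
    have hx5 : (‖Rlam‖ * ‖uL‖)^2 = ‖Rlam‖^2 * (‖uL‖*‖uL‖) := by ring
    have hx6 : M^2 * ‖uL‖^2 = M^2 * (‖uL‖*‖uL‖) := by ring
    rw [hx5] at hx2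
    rw [hx6] at hx1
    linarith
  have hRw0 : ∀ z : H₀,
      Tendsto (fun j => (inner ℂ (Rn (n' j) (u (ψ j))) z : ℂ)) atTop (nhds 0) := by
    intro z
    refine (hRw_weak z).congr fun j => ?_
    have e3 : w j = u (ψ j) := by rw [hwdef, huL0]; simp
    rw [e3]
  obtain ⟨K, hK⟩ := eventually_atTop.1 (hRu'.eventually_const_lt hM0)
  set c : ℕ → ℝ := fun j => ‖Rn (n' (j+K)) (u (ψ (j+K)))‖⁻¹ with hc
  have hKpos : ∀ j : ℕ, 0 < ‖Rn (n' (j+K)) (u (ψ (j+K)))‖ := fun j => hK (j+K) (by omega)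
  have hctend : Tendsto c atTop (nhds M⁻¹) :=
    (hRu'.comp (tendsto_add_atTop_nat K)).inv₀ (ne_of_gt hM0)
  refine ⟨fun j => n' (j + K), fun j => ((c j : ℝ) : ℂ) • Rn (n' (j+K)) (u (ψ (j+K))),
    hmono.comp (fun a b hab => by simpa using Nat.add_lt_add_right hab K :
      StrictMono fun j : ℕ => j + K), ?_, ?_, ?_, ?_⟩
  · intro j
    exact Submodule.smul_mem _ _ (((hres (ψ (j+K))).1 _ (hu2 (ψ (j+K)))).1)
  · intro j
    have hcpos : (0:ℝ) ≤ c j := inv_nonneg.mpr (norm_nonneg _)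
    show ‖((c j : ℝ) : ℂ) • Rn (n' (j+K)) (u (ψ (j+K)))‖ = 1
    rw [norm_smul, Complex.norm_real, Real.norm_eq_abs, abs_of_nonneg hcpos]
    exact inv_mul_cancel₀ (ne_of_gt (hKpos j))
  · intro y
    have h2 : Tendsto (fun j => (inner ℂ (Rn (n' (j+K)) (u (ψ (j+K)))) y : ℂ)) atTop
        (nhds 0) := (hRw0 y).comp (tendsto_add_atTop_nat K)
    have h3 : Tendsto (fun j => ((c j : ℝ) : ℂ)) atTop (nhds ((M⁻¹ : ℝ) : ℂ)) :=
      (Complex.continuous_ofReal.tendsto _).comp hctend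
    have h4 := h3.mul h2
    rw [mul_zero] at h4
    refine h4.congr fun j => ?_
    show ((c j : ℝ) : ℂ) * (inner ℂ (Rn (n' (j+K)) (u (ψ (j+K)))) y : ℂ)
      = inner ℂ (((c j : ℝ) : ℂ) • Rn (n' (j+K)) (u (ψ (j+K))) - 0) y
    rw [sub_zero, inner_smul_left, Complex.conj_ofReal]
  · have heq : ∀ j, Tn (n' (j+K)) (((c j : ℝ) : ℂ) • Rn (n' (j+K)) (u (ψ (j+K))))
        - lam • (((c j : ℝ) : ℂ) • Rn (n' (j+K)) (u (ψ (j+K))))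
        = ((c j : ℝ) : ℂ) • u (ψ (j+K)) := by
      intro j
      have h6 : Tn (n' (j+K)) (Rn (n' (j+K)) (u (ψ (j+K))))
          - lam • Rn (n' (j+K)) (u (ψ (j+K))) = u (ψ (j+K)) :=
        ((hres (ψ (j+K))).1 _ (hu2 (ψ (j+K)))).2
      calc Tn (n' (j+K)) (((c j : ℝ) : ℂ) • Rn (n' (j+K)) (u (ψ (j+K))))
            - lam • (((c j : ℝ) : ℂ) • Rn (n' (j+K)) (u (ψ (j+K))))
          = ((c j : ℝ) : ℂ) • (Tn (n' (j+K)) (Rn (n' (j+K)) (u (ψ (j+K))))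
              - lam • Rn (n' (j+K)) (u (ψ (j+K)))) := by
            rw [map_smul, smul_sub, smul_comm lam]
        _ = ((c j : ℝ) : ℂ) • u (ψ (j+K)) := by rw [h6]
    have h5 : Tendsto (fun j => c j * ‖u (ψ (j+K))‖) atTop (nhds (M⁻¹ * 1)) :=
      hctend.mul (hun'.comp (tendsto_add_atTop_nat K))
    rw [mul_one] at h5
    refine h5.congr fun j => ?_
    have hcpos : (0:ℝ) ≤ c j := inv_nonneg.mpr (norm_nonneg _)
    show c j * ‖u (ψ (j+K))‖
      = ‖Tn (n' (j+K)) (((c j : ℝ) : ℂ) • Rn (n' (j+K)) (u (ψ (j+K))))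
        - lam • (((c j : ℝ) : ℂ) • Rn (n' (j+K)) (u (ψ (j+K))))‖
    rw [heq j, norm_smul, Complex.norm_real, Real.norm_eq_abs, abs_of_nonneg hcpos]
end Aux

theorem stmt14 [TopologicalSpace.SeparableSpace H₀]
    (Hsp dom : Submodule ℂ H₀) (T : H₀ →ₗ[ℂ] H₀)
    (hHcl : IsClosed ((Hsp : Set H₀)))
    (hT : ActsIn Hsp dom T) (hTcl : IsClosedOp dom T)
    (Hn domn : ℕ → Submodule ℂ H₀) (Tn : ℕ → H₀ →ₗ[ℂ] H₀)
    (hHncl : ∀ n, IsClosed ((Hn n : Set H₀)))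
    (hTn : ∀ n, ActsIn (Hn n) (domn n) (Tn n))
    (hTncl : ∀ n, IsClosedOp (domn n) (Tn n))
    (P : H₀ →L[ℂ] H₀) (Pn : ℕ → H₀ →L[ℂ] H₀)
    (hP : IsOrthProj Hsp P) (hPn : ∀ n, IsOrthProj (Hn n) (Pn n))
    (hPconv : ∀ y : H₀, Tendsto (fun n => Pn n y) atTop (nhds (P y)))
    (domS : Submodule ℂ H₀) (S : H₀ →ₗ[ℂ] H₀)
    (domSn : ℕ → Submodule ℂ H₀) (Sn : ℕ → H₀ →ₗ[ℂ] H₀)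
    (hadjT : IsAdjointOp Hsp dom T domS S)
    (hadjn : ∀ n, IsAdjointOp (Hn n) (domn n) (Tn n) (domSn n) (Sn n))
    (hconv : GSRConv Hsp dom T Hn domn Tn)
    (hconvadj : GSRConv Hsp domS S Hn domSn Sn)
    (lam : ℂ) (Rlam : H₀ →L[ℂ] H₀)
    (hrho : InResolvent Hsp dom T lam Rlam)
    (n₀ : ℕ) (C : ℝ) (Rn : ℕ → H₀ →L[ℂ] H₀)
    (hDelta : ∀ n, n ≥ n₀ → InResolvent (Hn n) (domn n) (Tn n) lam (Rn n) ∧ ‖Rn n‖ ≤ C)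
    (lamn : ℕ → ℂ) (hlamn : Tendsto lamn atTop (nhds lam)) :
    ∃ (n₁ : ℕ) (R' : ℕ → H₀ →L[ℂ] H₀),
      (∀ n, n ≥ n₁ → InResolvent (Hn n) (domn n) (Tn n) (lamn n) (R' n)) ∧
      Filter.limsup (fun n => ‖R' n‖) atTop = Filter.limsup (fun n => ‖Rn n‖) atTop ∧
      ‖Rlam‖ ≤ Filter.limsup (fun n => ‖Rn n‖) atTop ∧
      (‖Rlam‖ < Filter.limsup (fun n => ‖Rn n‖) atTop →
        LimEssNear domn Tn (Filter.limsup (fun n => ‖Rn n‖) atTop)⁻¹ lam ∧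
        LimEssNear domSn Sn (Filter.limsup (fun n => ‖Rn n‖) atTop)⁻¹
          ((starRingEnd ℂ) lam)) := by
  classical
  obtain ⟨nc, lam₀, R₀, Rn₀, hR₀, hRn₀c, hconv₀⟩ := hconv
  obtain ⟨nd, lam₀', R₀', Rn₀', hR₀', hRn₀c', hconv₀'⟩ := hconvadj
  have hC0 : (0:ℝ) ≤ C := le_trans (norm_nonneg _) (hDelta n₀ le_rfl).2
  have hfev : ∀ᶠ n in atTop, ‖Rn n‖ ≤ C :=
    eventually_atTop.2 ⟨n₀, fun n hn => (hDelta n hn).2⟩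
  have hfev0 : ∀ᶠ n in atTop, (0:ℝ) ≤ ‖Rn n‖ := Eventually.of_forall fun n => norm_nonneg _
  have hbdd : IsBoundedUnder (· ≤ ·) atTop (fun n => ‖Rn n‖) :=
    isBoundedUnder_of_eventually_le hfev
  have hcobdd : IsCoboundedUnder (· ≤ ·) atTop (fun n => ‖Rn n‖) :=
    isCoboundedUnder_le_of_eventually_le atTop hfev0
  set M := limsup (fun n => ‖Rn n‖) atTop with hM
  have hM0 : 0 ≤ M := le_limsup_of_frequently_le hfev0.frequently hbdd
  have hstrongR : ∀ y, Tendsto (fun n => Rn n y) atTop (nhds (Rlam y)) :=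
    strong_res_conv Hsp dom T hT.1 hT.2.2 Hn domn Tn P Pn hP hPn hPconv nc lam₀ R₀ Rn₀ hR₀
      hRn₀c hconv₀ lam Rlam hrho n₀ C Rn hDelta
  have hRlamM : ‖Rlam‖ ≤ M := by
    refine le_of_forall_pos_le_add fun ε hε => ?_
    refine ContinuousLinearMap.opNorm_le_bound _ (by linarith) fun y => ?_
    have hev : ∀ᶠ n in atTop, ‖Rn n y‖ ≤ (M + ε) * ‖y‖ := by
      filter_upwards [eventually_lt_of_limsup_lt (show M < M + ε by linarith) hbdd] with n hn
      calc ‖Rn n y‖ ≤ ‖Rn n‖ * ‖y‖ := (Rn n).le_opNorm y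
        _ ≤ (M + ε) * ‖y‖ := mul_le_mul_of_nonneg_right hn.le (norm_nonneg _)
    exact le_of_tendsto (hstrongR y).norm hev
  have hlamdiff : Tendsto (fun n => ‖lamn n - lam‖) atTop (nhds 0) := by
    have h9 := (hlamn.sub (tendsto_const_nhds (x := lam))).norm
    simpa using h9
  set t : ℕ → (H₀ →L[ℂ] H₀) := fun n => (lamn n - lam) • Rn n with ht
  have htbound : ∀ n, n ≥ n₀ → ‖t n‖ ≤ ‖lamn n - lam‖ * C := by
    intro n hn
    show ‖(lamn n - lam) • Rn n‖ ≤ ‖lamn n - lam‖ * C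
    rw [norm_smul]
    exact mul_le_mul_of_nonneg_left (hDelta n hn).2 (norm_nonneg _)
  have hQ : ∀ᶠ n in atTop, n ≥ n₀ ∧ ‖t n‖ < 1/2 := by
    have h1 : ∀ᶠ n in atTop, ‖lamn n - lam‖ < 1/(2*(C+1)) :=
      hlamdiff.eventually_lt_const (by positivity)
    filter_upwards [h1, eventually_ge_atTop n₀] with n h2 h3
    refine ⟨h3, lt_of_le_of_lt (htbound n h3) ?_⟩
    calc ‖lamn n - lam‖ * C ≤ ‖lamn n - lam‖ * (C+1) :=
          mul_le_mul_of_nonneg_left (by linarith) (norm_nonneg _)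
      _ < (1/(2*(C+1))) * (C+1) := mul_lt_mul_of_pos_right h2 (by positivity)
      _ = 1/2 := by
          have h8 : C + 1 ≠ 0 := by positivity
          field_simp
  obtain ⟨n₁, hn₁⟩ := eventually_atTop.1 hQ
  set R' : ℕ → H₀ →L[ℂ] H₀ := fun n =>
    if h : ‖t n‖ < 1 then Rn n * ↑(Units.oneSub (t n) h)⁻¹ else Rn n with hR'def
  have hR'res : ∀ n, n ≥ n₁ → InResolvent (Hn n) (domn n) (Tn n) (lamn n) (R' n) := by
    intro n hn
    obtain ⟨hn0, hlt2⟩ := hn₁ n hn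
    have h1 : ‖t n‖ < 1 := lt_trans hlt2 (by norm_num)
    have h3 : R' n = Rn n * ↑(Units.oneSub (t n) h1)⁻¹ := dif_pos h1
    rw [h3]
    exact (res_shift (hTn n).1 (hDelta n hn0).1 (hPn n) (μ := lamn n) h1).1
  have hR'bound : ∀ n, n ≥ n₁ → ‖R' n - Rn n‖ ≤ 2 * C * ‖t n‖ := by
    intro n hn
    obtain ⟨hn0, hlt2⟩ := hn₁ n hn
    have h1 : ‖t n‖ < 1 := lt_trans hlt2 (by norm_num)
    have h3 : R' n = Rn n * ↑(Units.oneSub (t n) h1)⁻¹ := dif_pos h1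
    rw [h3]
    calc ‖Rn n * ↑(Units.oneSub (t n) h1)⁻¹ - Rn n‖ ≤ 2 * ‖Rn n‖ * ‖t n‖ :=
          (res_shift (hTn n).1 (hDelta n hn0).1 (hPn n) (μ := lamn n) h1).2 hlt2.le
      _ ≤ 2 * C * ‖t n‖ := by
          have h5 := (hDelta n hn0).2
          nlinarith [norm_nonneg (t n), norm_nonneg (Rn n)]
  have htnorm : Tendsto (fun n => ‖t n‖) atTop (nhds 0) := by
    have hg : Tendsto (fun n => ‖lamn n - lam‖ * C) atTop (nhds 0) := by
      have h9 := hlamdiff.mul_const C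
      rw [zero_mul] at h9
      exact h9
    refine squeeze_zero_norm' ?_ hg
    filter_upwards [eventually_ge_atTop n₀] with n hn
    rw [Real.norm_eq_abs, abs_of_nonneg (norm_nonneg _)]
    exact htbound n hn
  have hdiff0 : Tendsto (fun n => ‖R' n‖ - ‖Rn n‖) atTop (nhds 0) := by
    have hg : Tendsto (fun n => 2 * C * ‖t n‖) atTop (nhds 0) := by
      have h9 := htnorm.const_mul (2*C)
      rw [mul_zero] at h9
      exact h9
    refine squeeze_zero_norm' ?_ hg
    filter_upwards [eventually_ge_atTop n₁] with n hn
    rw [Real.norm_eq_abs]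
    exact le_trans (abs_norm_sub_norm_le _ _) (hR'bound n hn)
  have hlimsup_eq : limsup (fun n => ‖R' n‖) atTop = limsup (fun n => ‖Rn n‖) atTop := by
    refine limsup_eq_of_sub_tendsto (c := C + 1) hdiff0 ?_ ?_
    · have h3' := htnorm.const_mul (2*C)
      rw [mul_zero] at h3'
      filter_upwards [eventually_ge_atTop n₁, eventually_ge_atTop n₀,
        h3'.eventually_lt_const one_pos] with n h1 h2 h3
      have h4 : ‖R' n‖ ≤ ‖Rn n‖ + ‖R' n - Rn n‖ := by
        have h5 := norm_add_le (Rn n) (R' n - Rn n)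
        simpa using h5
      rw [abs_of_nonneg (norm_nonneg _)]
      have h6 := hR'bound n h1
      have h7 := (hDelta n h2).2
      linarith
    · filter_upwards [hfev] with n hn
      rw [abs_of_nonneg (norm_nonneg _)]
      linarith
  refine ⟨n₁, R', hR'res, hlimsup_eq, hRlamM, ?_⟩
  intro hlt
  have hSin : ∀ y ∈ domS, S y ∈ Hsp := adjS_in hadjT.1 hR₀' hP
  have hadjR : InResolvent Hsp domS S ((starRingEnd ℂ) lam) (ContinuousLinearMap.adjoint Rlam) :=
    adjoint_res hHcl hT.1 hT.2.2 hadjT hSin hrho P hP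
  set N := max n₀ nd with hN
  have hadjRn : ∀ n, n ≥ N → InResolvent (Hn n) (domSn n) (Sn n) ((starRingEnd ℂ) lam)
      (ContinuousLinearMap.adjoint (Rn n)) ∧ ‖ContinuousLinearMap.adjoint (Rn n)‖ ≤ C := by
    intro n hn
    have hn0 : n ≥ n₀ := le_trans (le_max_left _ _) hn
    have hnd : n ≥ nd := le_trans (le_max_right _ _) hn
    refine ⟨adjoint_res (hHncl n) (hTn n).1 (hTn n).2.2 (hadjn n)
      (adjS_in (hadjn n).1 (hRn₀c' n hnd) (hPn n)) (hDelta n hn0).1 (Pn n) (hPn n), ?_⟩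
    rw [LinearIsometryEquiv.norm_map]
    exact (hDelta n hn0).2
  have hstrongRadj : ∀ z, Tendsto (fun n => ContinuousLinearMap.adjoint (Rn n) z) atTop
      (nhds (ContinuousLinearMap.adjoint Rlam z)) :=
    strong_res_conv Hsp domS S hadjT.1 hSin Hn domSn Sn P Pn hP hPn hPconv
      nd lam₀' R₀' Rn₀' hR₀' hRn₀c' hconv₀' ((starRingEnd ℂ) lam)
      (ContinuousLinearMap.adjoint Rlam) hadjR N C
      (fun n => ContinuousLinearMap.adjoint (Rn n)) hadjRn
  have hfreq : ∀ k : ℕ, ∃ᶠ n in atTop,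
      n ≥ N ∧ M - 1/(k+1) < ‖Rn n‖ ∧ ‖Rn n‖ < M + 1/(k+1) := by
    intro k
    have hpos : (0:ℝ) < 1/((k:ℝ)+1) := by positivity
    have h1 : ∃ᶠ n in atTop, M - 1/(k+1) < ‖Rn n‖ :=
      frequently_lt_of_lt_limsup hcobdd (show M - 1/(k+1) < M by linarith)
    have h2 : ∀ᶠ n in atTop, ‖Rn n‖ < M + 1/(k+1) :=
      eventually_lt_of_limsup_lt (show M < M + 1/(k+1) by linarith) hbdd
    exact (h1.and_eventually (h2.and (eventually_ge_atTop N))).mono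
      fun n hn => ⟨hn.2.2, hn.1, hn.2.1⟩
  obtain ⟨φ, hφ, hφP⟩ := extraction_forall_of_frequently hfreq
  have hφN : ∀ k, φ k ≥ N := fun k => (hφP k).1
  have hφnorm : Tendsto (fun k => ‖Rn (φ k)‖) atTop (nhds M) := by
    have hone : Tendsto (fun k : ℕ => 1/((k:ℝ)+1)) atTop (nhds 0) :=
      tendsto_one_div_add_atTop_nhds_zero_nat
    have hl : Tendsto (fun k : ℕ => M - 1/((k:ℝ)+1)) atTop (nhds M) := by
      have h9 := (tendsto_const_nhds (x := M)).sub hone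
      rw [sub_zero] at h9
      exact h9
    have hup : Tendsto (fun k : ℕ => M + 1/((k:ℝ)+1)) atTop (nhds M) := by
      have h9 := (tendsto_const_nhds (x := M)).add hone
      rw [add_zero] at h9
      exact h9
    exact tendsto_of_tendsto_of_tendsto_of_le_of_le hl hup
      (fun k => (hφP k).2.1.le) (fun k => (hφP k).2.2.le)
  constructor
  · exact singular_seq Hn domn Tn Pn hPn lam Rn Rlam hstrongR hstrongRadj M hlt φ hφ
      (fun k => (hDelta (φ k) (le_trans (le_max_left _ _) (hφN k))).1) hφnorm
  · have hadj2 : ∀ z, Tendsto (fun n =>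
        ContinuousLinearMap.adjoint (ContinuousLinearMap.adjoint (Rn n)) z) atTop
        (nhds (ContinuousLinearMap.adjoint (ContinuousLinearMap.adjoint Rlam) z)) := by
      intro z
      simpa [ContinuousLinearMap.adjoint_adjoint] using hstrongR z
    have hnormeq : (fun k => ‖ContinuousLinearMap.adjoint (Rn (φ k))‖)
        = fun k => ‖Rn (φ k)‖ := by
      funext k
      exact LinearIsometryEquiv.norm_map _ _
    exact singular_seq Hn domSn Sn Pn hPn ((starRingEnd ℂ) lam)
      (fun n => ContinuousLinearMap.adjoint (Rn n)) (ContinuousLinearMap.adjoint Rlam)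
      hstrongRadj hadj2 M (by rw [LinearIsometryEquiv.norm_map]; exact hlt) φ hφ
      (fun k => (hadjRn (φ k) (hφN k)).1) (by rw [hnormeq]; exact hφnorm)


end
end

section
/- Assume T_n* converges to T* in generalised strong resolvent sense. If x_n ∈ dom(T_n), n ∈ I ⊂ ℕ infinite, satisfy ‖x_n‖ = 1, x_n → 0 weakly, and (‖T_n x_n‖)_{n ∈ I} is bounded, then T_n x_n → 0 weakly. -/
open Filter Topology

noncomputable section

variable {H₀ : Type} [NormedAddCommGroup H₀] [InnerProductSpace ℂ H₀] [CompleteSpace H₀]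

private lemma aux_inner_sub {a : ℕ → H₀} {C : ℝ} (hC : ∀ k, ‖a k‖ ≤ C)
    {b : ℕ → H₀} {b₀ : H₀} (hb : Tendsto b atTop (nhds b₀)) :
    Tendsto (fun k => (inner ℂ (a k) (b k) : ℂ) - inner ℂ (a k) b₀) atTop (nhds 0) := by
  have h2 : Tendsto (fun k => ‖b k - b₀‖) atTop (nhds 0) :=
    tendsto_iff_norm_sub_tendsto_zero.mp hb
  have h1 : Tendsto (fun k => C * ‖b k - b₀‖) atTop (nhds 0) := by
    simpa using h2.const_mul C
  refine squeeze_zero_norm (fun k => ?_) h1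
  rw [← inner_sub_right]
  calc ‖(inner ℂ (a k) (b k - b₀) : ℂ)‖ ≤ ‖a k‖ * ‖b k - b₀‖ := norm_inner_le_norm _ _
    _ ≤ C * ‖b k - b₀‖ := mul_le_mul_of_nonneg_right (hC k) (norm_nonneg _)

set_option synthInstance.maxHeartbeats 1000000 in
private lemma adj_orth_zero (Hsp dom : Submodule ℂ H₀) (T : H₀ →ₗ[ℂ] H₀)
    (hTcl : IsClosedOp dom T)
    (P : H₀ →L[ℂ] H₀) (hP : IsOrthProj Hsp P)
    (domS : Submodule ℂ H₀) (S : H₀ →ₗ[ℂ] H₀)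
    (hadjT : IsAdjointOp Hsp dom T domS S)
    (hTd : dom ≤ Hsp) (hTmap : ∀ x ∈ dom, T x ∈ Hsp)
    (z : H₀) (hz1 : z ∈ Hsp) (hz2 : ∀ u ∈ domS, (inner ℂ u z : ℂ) = 0) : z = 0 := by
  classical
  let g : H₀ →ₗ[ℂ] WithLp 2 (H₀ × H₀) :=
    (WithLp.linearEquiv 2 ℂ (H₀ × H₀)).symm.toLinearMap ∘ₗ (T.prod (-LinearMap.id))
  let M : Submodule ℂ (WithLp 2 (H₀ × H₀)) := dom.map g
  have hgfst : ∀ v : H₀, (g v).fst = T v := fun v => rfl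
  have hgsnd : ∀ v : H₀, (g v).snd = -v := fun v => rfl
  set p0 : WithLp 2 (H₀ × H₀) := (WithLp.linearEquiv 2 ℂ (H₀ × H₀)).symm (z, 0) with hp0
  have hp0fst : p0.fst = z := rfl
  have hp0snd : p0.snd = 0 := rfl
  have hmem : p0 ∈ Mᗮᗮ := by
    rw [Submodule.mem_orthogonal]
    intro q hq
    have hq' : ∀ v ∈ dom, (inner ℂ (T v) q.fst : ℂ) = inner ℂ v q.snd := by
      intro v hv
      have h0 : (inner ℂ (g v) q : ℂ) = 0 :=
        (Submodule.mem_orthogonal M q).mp hq _ (Submodule.mem_map_of_mem hv)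
      rw [WithLp.prod_inner_apply] at h0
      change inner ℂ (g v).fst q.fst + inner ℂ (g v).snd q.snd = 0 at h0
      rw [hgfst, hgsnd, inner_neg_left] at h0
      linear_combination h0
    have hfmem : P q.fst ∈ domS := by
      have h1 : ∀ v ∈ dom, (inner ℂ (T v) (P q.fst) : ℂ) = inner ℂ v (P q.snd) := by
        intro v hv
        have e1 : (inner ℂ (T v) (q.fst - P q.fst) : ℂ) = 0 :=
          Submodule.inner_right_of_mem_orthogonal (hTmap v hv) (hP q.fst).2
        have e2 : (inner ℂ v (q.snd - P q.snd) : ℂ) = 0 :=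
          Submodule.inner_right_of_mem_orthogonal (hTd hv) (hP q.snd).2
        rw [inner_sub_right] at e1 e2
        have := hq' v hv
        linear_combination this - e1 + e2
      exact (((hadjT.2 (P q.fst) (hP q.fst).1 (P q.snd) (hP q.snd).1).mpr h1)).1
    have e3 : (inner ℂ (q.fst - P q.fst) z : ℂ) = 0 :=
      Submodule.inner_left_of_mem_orthogonal hz1 (hP q.fst).2
    rw [inner_sub_left] at e3
    have e4 : (inner ℂ (P q.fst) z : ℂ) = 0 := hz2 _ hfmem
    rw [WithLp.prod_inner_apply]
    change inner ℂ q.fst p0.fst + inner ℂ q.snd p0.snd = 0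
    rw [hp0fst, hp0snd, inner_zero_right]
    linear_combination e3 + e4
  rw [Submodule.orthogonal_orthogonal_eq_closure] at hmem
  have hcl : p0 ∈ closure (M : Set (WithLp 2 (H₀ × H₀))) := hmem
  have hFU : FrechetUrysohnSpace (WithLp 2 (H₀ × H₀)) :=
    FirstCountableTopology.frechetUrysohnSpace
  obtain ⟨seq, hseqmem, hseqlim⟩ := mem_closure_iff_seq_limit.mp hcl
  choose v hvmem hgv using fun k => Submodule.mem_map.mp (hseqmem k)
  have hfst : Tendsto (fun k => T (v k)) atTop (nhds z) := by
    have h := ((WithLp.continuous_fst 2 H₀ H₀).tendsto p0).comp hseqlim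
    rw [hp0fst] at h
    refine h.congr fun k => ?_
    show (seq k).fst = T (v k)
    rw [← hgv k]; rfl
  have hsnd : Tendsto v atTop (nhds 0) := by
    have h := ((WithLp.continuous_snd 2 H₀ H₀).tendsto p0).comp hseqlim
    rw [hp0snd] at h
    have h2 : Tendsto (fun k => -(v k)) atTop (nhds 0) := by
      refine h.congr fun k => ?_
      show (seq k).snd = -(v k)
      rw [← hgv k]; rfl
    simpa using h2.neg
  obtain ⟨_, hT0⟩ := hTcl v 0 z hvmem hsnd hfst
  rw [← hT0, map_zero]

private lemma adj_dense (Hsp dom : Submodule ℂ H₀) (T : H₀ →ₗ[ℂ] H₀)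
    (hTcl : IsClosedOp dom T) (P : H₀ →L[ℂ] H₀) (hP : IsOrthProj Hsp P)
    (domS : Submodule ℂ H₀) (S : H₀ →ₗ[ℂ] H₀)
    (hadjT : IsAdjointOp Hsp dom T domS S)
    (hTd : dom ≤ Hsp) (hTmap : ∀ x ∈ dom, T x ∈ Hsp) :
    ∀ y ∈ Hsp, y ∈ closure (domS : Set H₀) := by
  intro y hy
  have h1 : y ∈ domSᗮᗮ := by
    rw [Submodule.mem_orthogonal]
    intro w hw
    have hPw : P w = 0 := by
      refine adj_orth_zero Hsp dom T hTcl P hP domS S hadjT hTd hTmap (P w) (hP w).1 ?_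
      intro u hu
      have e1 : (inner ℂ u (w - P w) : ℂ) = 0 :=
        Submodule.inner_right_of_mem_orthogonal (hadjT.1 hu) (hP w).2
      rw [inner_sub_right] at e1
      have e2 : (inner ℂ u w : ℂ) = 0 := (Submodule.mem_orthogonal domS w).mp hw u hu
      linear_combination e2 - e1
    have hwH : w ∈ Hspᗮ := by
      have := (hP w).2; rwa [hPw, sub_zero] at this
    exact Submodule.inner_left_of_mem_orthogonal hy hwH
  rw [Submodule.orthogonal_orthogonal_eq_closure] at h1
  exact h1

theorem stmt15 [TopologicalSpace.SeparableSpace H₀]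
    (Hsp dom : Submodule ℂ H₀) (T : H₀ →ₗ[ℂ] H₀)
    (hHcl : IsClosed ((Hsp : Set H₀)))
    (hT : ActsIn Hsp dom T) (hTcl : IsClosedOp dom T)
    (Hn domn : ℕ → Submodule ℂ H₀) (Tn : ℕ → H₀ →ₗ[ℂ] H₀)
    (hHncl : ∀ n, IsClosed ((Hn n : Set H₀)))
    (hTn : ∀ n, ActsIn (Hn n) (domn n) (Tn n))
    (hTncl : ∀ n, IsClosedOp (domn n) (Tn n))
    (P : H₀ →L[ℂ] H₀) (Pn : ℕ → H₀ →L[ℂ] H₀)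
    (hP : IsOrthProj Hsp P) (hPn : ∀ n, IsOrthProj (Hn n) (Pn n))
    (hPconv : ∀ y : H₀, Tendsto (fun n => Pn n y) atTop (nhds (P y)))
    (domS : Submodule ℂ H₀) (S : H₀ →ₗ[ℂ] H₀)
    (domSn : ℕ → Submodule ℂ H₀) (Sn : ℕ → H₀ →ₗ[ℂ] H₀)
    (hadjT : IsAdjointOp Hsp dom T domS S)
    (hadjn : ∀ n, IsAdjointOp (Hn n) (domn n) (Tn n) (domSn n) (Sn n))
    (hconvadj : GSRConv Hsp domS S Hn domSn Sn)
    (φ : ℕ → ℕ) (hφ : StrictMono φ) (x : ℕ → H₀)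
    (hx : ∀ k, x k ∈ domn (φ k)) (hx1 : ∀ k, ‖x k‖ = 1) (hw : WeakTendsto x 0)
    (hbdd : ∃ C : ℝ, ∀ k, ‖Tn (φ k) (x k)‖ ≤ C) :
    WeakTendsto (fun k => Tn (φ k) (x k)) 0 := by
  obtain ⟨C, hC⟩ := hbdd
  have hC0 : (0:ℝ) ≤ C := le_trans (norm_nonneg _) (hC 0)
  obtain ⟨n₀, lam₀, R, Rn, hR, hRn, hRconv⟩ := hconvadj
  set z : ℕ → H₀ := fun k => Tn (φ k) (x k) with hzdef
  have hx_weak : ∀ y : H₀, Tendsto (fun k => (inner ℂ (x k) y : ℂ)) atTop (nhds 0) := by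
    intro y; simpa using hw y
  have hφtop : Tendsto φ atTop atTop := hφ.tendsto_atTop
  have hge : ∀ᶠ k in atTop, n₀ ≤ φ k := hφtop.eventually_ge_atTop n₀
  have hx1' : ∀ k, ‖x k‖ ≤ 1 := fun k => le_of_eq (hx1 k)
  -- every element of domS is "killed" in the limit
  have step5 : ∀ u ∈ domS, Tendsto (fun k => (inner ℂ (z k) u : ℂ)) atTop (nhds 0) := by
    intro u hu
    set t : H₀ := S u - lam₀ • u with ht
    have hRt : R t = u := hR.2.1 u hu
    have hwlim : Tendsto (fun k => Rn (φ k) t) atTop (nhds u) := by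
      have := (hRconv t).comp hφtop
      rwa [hRt] at this
    have hPlim : Tendsto (fun k => Pn (φ k) t) atTop (nhds (P t)) := (hPconv t).comp hφtop
    have hxP : Tendsto (fun k => (inner ℂ (x k) (Pn (φ k) t) : ℂ)) atTop (nhds 0) := by
      have h1 := (aux_inner_sub hx1' hPlim).add (hx_weak (P t))
      simpa using h1
    have hxw : Tendsto (fun k => (inner ℂ (x k) (Rn (φ k) t) : ℂ)) atTop (nhds 0) := by
      have h1 := (aux_inner_sub hx1' hwlim).add (hx_weak u)
      simpa using h1
    have key : (fun k => (inner ℂ (x k) (Pn (φ k) t) : ℂ) + lam₀ * inner ℂ (x k) (Rn (φ k) t))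
        =ᶠ[atTop] fun k => (inner ℂ (z k) (Rn (φ k) t) : ℂ) := by
      filter_upwards [hge] with k hk
      obtain ⟨h1, h2, h3⟩ := hRn (φ k) hk
      have hPt : Pn (φ k) t ∈ Hn (φ k) := (hPn (φ k) t).1
      have hRPt : Rn (φ k) (Pn (φ k) t) = Rn (φ k) t := by
        have h0 : Rn (φ k) (t - Pn (φ k) t) = 0 := h3 _ (hPn (φ k) t).2
        rw [map_sub, sub_eq_zero] at h0
        exact h0.symm
      obtain ⟨hwdom, hweq⟩ := h1 _ hPt
      rw [hRPt] at hwdom hweq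
      have hwH : Rn (φ k) t ∈ Hn (φ k) := (hadjn (φ k)).1 hwdom
      have hSeq : Sn (φ k) (Rn (φ k) t) = Pn (φ k) t + lam₀ • Rn (φ k) t := by
        rw [← hweq]; abel
      have hSH : Sn (φ k) (Rn (φ k) t) ∈ Hn (φ k) := by
        rw [hSeq]
        exact (Hn (φ k)).add_mem hPt ((Hn (φ k)).smul_mem _ hwH)
      have hadj :=
        ((hadjn (φ k)).2 (Rn (φ k) t) hwH (Sn (φ k) (Rn (φ k) t)) hSH).mp ⟨hwdom, rfl⟩
      have heq := hadj (x k) (hx k)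
      rw [hSeq, inner_add_right, inner_smul_right] at heq
      exact heq.symm
    have hzw : Tendsto (fun k => (inner ℂ (z k) (Rn (φ k) t) : ℂ)) atTop (nhds 0) := by
      have h1 := (hxP.add (hxw.const_mul lam₀)).congr' key
      simpa using h1
    have hdiff := aux_inner_sub hC hwlim
    have h2 := hzw.sub hdiff
    simpa [hzdef] using h2
  -- final weak convergence
  intro y
  have hPy : P y ∈ closure (domS : Set H₀) :=
    adj_dense Hsp dom T hTcl P hP domS S hadjT hT.1 hT.2.2 (P y) (hP y).1
  have hzPy : Tendsto (fun k => (inner ℂ (z k) (P y) : ℂ)) atTop (nhds 0) := by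
    rw [NormedAddCommGroup.tendsto_nhds_zero]
    intro ε hε
    obtain ⟨u, hu_mem, hu_close⟩ : ∃ u ∈ (domS : Set H₀), ‖P y - u‖ < ε / (2 * (C + 1)) := by
      obtain ⟨u, hu1, hu2⟩ :=
        Metric.mem_closure_iff.mp hPy (ε / (2 * (C + 1))) (by positivity)
      exact ⟨u, hu1, by rwa [dist_eq_norm] at hu2⟩
    have h5' := NormedAddCommGroup.tendsto_nhds_zero.mp (step5 u hu_mem) (ε/2) (by positivity)
    filter_upwards [h5'] with k hk
    have e1 : (inner ℂ (z k) (P y) : ℂ) = inner ℂ (z k) u + inner ℂ (z k) (P y - u) := by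
      rw [inner_sub_right]; ring
    have hb2 : ‖(inner ℂ (z k) (P y - u) : ℂ)‖ < ε / 2 := by
      have hb : ‖(inner ℂ (z k) (P y - u) : ℂ)‖ ≤ C * ‖P y - u‖ := by
        calc ‖(inner ℂ (z k) (P y - u) : ℂ)‖ ≤ ‖z k‖ * ‖P y - u‖ := norm_inner_le_norm _ _
          _ ≤ C * ‖P y - u‖ := mul_le_mul_of_nonneg_right (hC k) (norm_nonneg _)
      have hlt : C * ‖P y - u‖ < ε / 2 := by
        have h1 : C * ‖P y - u‖ ≤ C * (ε / (2 * (C + 1))) :=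
          mul_le_mul_of_nonneg_left (le_of_lt hu_close) hC0
        have h2 : C * (ε / (2 * (C + 1))) < ε / 2 := by
          have hδpos : (0:ℝ) < ε / (2 * (C + 1)) := by positivity
          have hδ : ε / (2 * (C + 1)) * (2 * (C + 1)) = ε :=
            div_mul_cancel₀ _ (by positivity)
          nlinarith [hδpos, hδ]
        linarith
      exact lt_of_le_of_lt hb hlt
    rw [e1]
    calc ‖(inner ℂ (z k) u : ℂ) + inner ℂ (z k) (P y - u)‖
        ≤ ‖(inner ℂ (z k) u : ℂ)‖ + ‖(inner ℂ (z k) (P y - u) : ℂ)‖ := norm_add_le _ _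
      _ < ε/2 + ε/2 := add_lt_add hk hb2
      _ = ε := by ring
  have haux := aux_inner_sub hC ((hPconv y).comp hφtop)
  have hsum : Tendsto (fun k => (inner ℂ (z k) (Pn (φ k) y) : ℂ)) atTop (nhds 0) := by
    have h1 := haux.add hzPy
    simpa [hzdef] using h1
  have heq : ∀ k, (inner ℂ (z k) (Pn (φ k) y) : ℂ) = inner ℂ (z k - 0) y := by
    intro k
    have hzH : z k ∈ Hn (φ k) := (hTn (φ k)).2.2 (x k) (hx k)
    have e0 : (inner ℂ (z k) (y - Pn (φ k) y) : ℂ) = 0 :=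
      Submodule.inner_right_of_mem_orthogonal hzH (hPn (φ k) y).2
    rw [inner_sub_right] at e0
    rw [sub_zero]
    linear_combination -e0
  exact hsum.congr heq

end
end

section
/- The limiting essential ε-near spectrum Λ_{ess,ε}((T_n)) contains the set {λ + z : λ ∈ σ_ess((T_n)), |z| = ε}, and the essential ε-near spectrum Λ_{ess,ε}(T) contains {λ + z : λ ∈ σ_ess(T), |z| = ε}. Moreover both Λ_{ess,ε}(T) and Λ_{ess,ε}((T_n)) are closed subsets of ℂ. -/
open Filter Topology

noncomputable section

variable {H₀ : Type} [NormedAddCommGroup H₀] [InnerProductSpace ℂ H₀] [CompleteSpace H₀]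

-- Auxiliary lemmas

lemma auxR {f : ℕ → ℝ} {c : ℝ} {b : ℕ → ℝ} (h : ∀ m, |f m - c| ≤ b m)
    (hb : Tendsto b atTop (nhds 0)) : Tendsto f atTop (nhds c) := by
  rw [← tendsto_sub_nhds_zero_iff]
  exact squeeze_zero_norm (by simpa using h) hb

lemma evAbs {f : ℕ → ℝ} {c δ : ℝ} (h : Tendsto f atTop (nhds c)) (hδ : 0 < δ) :
    ∀ᶠ k in atTop, |f k - c| < δ := by
  have h2 : Tendsto (fun k => |f k - c|) atTop (nhds 0) := by
    simpa using (tendsto_sub_nhds_zero_iff.mpr h).abs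
  exact h2.eventually_lt_const hδ

lemma shift_core {x a : ℕ → H₀} {lam z : ℂ}
    (hx : ∀ k, ‖x k‖ = 1)
    (h : Tendsto (fun k => ‖a k - lam • x k‖) atTop (nhds 0)) :
    Tendsto (fun k => ‖a k - (lam + z) • x k‖) atTop (nhds ‖z‖) := by
  refine auxR (fun m => ?_) h
  have h1 : a m - (lam + z) • x m = (a m - lam • x m) - z • x m := by
    rw [add_smul]; abel
  have h2 : ‖z • x m‖ = ‖z‖ := by rw [norm_smul, hx m, mul_one]
  calc |‖a m - (lam + z) • x m‖ - ‖z‖|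
      = |‖(a m - lam • x m) - z • x m‖ - ‖-(z • x m)‖| := by rw [h1, norm_neg, h2]
    _ ≤ ‖((a m - lam • x m) - z • x m) - -(z • x m)‖ := abs_norm_sub_norm_le _ _
    _ = ‖a m - lam • x m‖ := by congr 1; abel

lemma limEssNear_closed [TopologicalSpace.SeparableSpace H₀]
    (domn : ℕ → Submodule ℂ H₀) (Tn : ℕ → H₀ →ₗ[ℂ] H₀) (eps : ℝ) :
    IsClosed {lam : ℂ | LimEssNear domn Tn eps lam} := by
  apply IsSeqClosed.isClosed
  intro L lam hL hconv
  have hNe : Nonempty H₀ := ⟨0⟩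
  set y : ℕ → H₀ := TopologicalSpace.denseSeq H₀ with hy_def
  have hy : DenseRange y := TopologicalSpace.denseRange_denseSeq H₀
  -- extract witnesses
  have hL' : ∀ m, LimEssNear domn Tn eps (L m) := hL
  let φf : ℕ → ℕ → ℕ := fun m => (hL' m).choose
  let Xf : ℕ → ℕ → H₀ := fun m => (hL' m).choose_spec.choose
  have props : ∀ m, StrictMono (φf m) ∧ (∀ k, Xf m k ∈ domn (φf m k)) ∧
      (∀ k, ‖Xf m k‖ = 1) ∧ WeakTendsto (Xf m) 0 ∧
      Tendsto (fun k => ‖Tn (φf m k) (Xf m k) - L m • Xf m k‖) atTop (nhds eps) :=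
    fun m => (hL' m).choose_spec.choose_spec
  -- choice of good indices
  have hGood : ∀ m N, ∃ k,
      ((∀ j ∈ Finset.range (m + 1), ‖(inner ℂ (Xf m k) (y j) : ℂ)‖ < 1 / ((m : ℝ) + 1)) ∧
        |‖Tn (φf m k) (Xf m k) - L m • Xf m k‖ - eps| < 1 / ((m : ℝ) + 1)) ∧
        N < φf m k := by
    intro m N
    have hpos : (0 : ℝ) < 1 / ((m : ℝ) + 1) := by positivity
    have e1 : ∀ᶠ k in atTop, ∀ j ∈ Finset.range (m + 1),
        ‖(inner ℂ (Xf m k) (y j) : ℂ)‖ < 1 / ((m : ℝ) + 1) := by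
      rw [Filter.eventually_all_finset]
      intro j _
      have hw := (props m).2.2.2.1 (y j)
      simp only [sub_zero] at hw
      have h3 : Tendsto (fun k => ‖(inner ℂ (Xf m k) (y j) : ℂ)‖) atTop (nhds 0) := by
        simpa using hw.norm
      exact h3.eventually_lt_const hpos
    have e2 := evAbs (props m).2.2.2.2 hpos
    have e3 : ∀ᶠ k in atTop, N < φf m k := by
      filter_upwards [eventually_gt_atTop N] with k hk
      exact lt_of_lt_of_le hk (props m).1.le_apply
    exact ((e1.and e2).and e3).exists
  -- recursive diagonal choice
  let K : ℕ → ℕ := Nat.rec (hGood 0 0).choose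
    (fun m' km => (hGood (m' + 1) (φf m' km)).choose)
  have hK : ∀ m, (∀ j ∈ Finset.range (m + 1),
      ‖(inner ℂ (Xf m (K m)) (y j) : ℂ)‖ < 1 / ((m : ℝ) + 1)) ∧
      |‖Tn (φf m (K m)) (Xf m (K m)) - L m • Xf m (K m)‖ - eps| < 1 / ((m : ℝ) + 1) := by
    intro m
    cases m with
    | zero => exact (hGood 0 0).choose_spec.1
    | succ m' => exact (hGood (m' + 1) (φf m' (K m'))).choose_spec.1
  have hKlt : ∀ m, φf m (K m) < φf (m + 1) (K (m + 1)) :=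
    fun m => (hGood (m + 1) (φf m (K m))).choose_spec.2
  refine ⟨fun m => φf m (K m), fun m => Xf m (K m), strictMono_nat_of_lt_succ hKlt,
    fun m => (props m).2.1 (K m), fun m => (props m).2.2.1 (K m), ?_, ?_⟩
  · -- weak convergence to 0
    intro w
    simp only [sub_zero]
    rw [NormedAddCommGroup.tendsto_nhds_zero]
    intro δ hδ
    obtain ⟨j, hj⟩ := Metric.denseRange_iff.mp hy w (δ / 2) (by positivity)
    have hδ2 : ∀ᶠ m : ℕ in atTop, 1 / ((m : ℝ) + 1) < δ / 2 :=
      tendsto_one_div_add_atTop_nhds_zero_nat.eventually_lt_const (by positivity)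
    filter_upwards [hδ2, eventually_ge_atTop j] with m h1 h2
    have hjm : j ∈ Finset.range (m + 1) := Finset.mem_range.mpr (Nat.lt_succ_of_le h2)
    have hinner := (hK m).1 j hjm
    have hsplit : (inner ℂ (Xf m (K m)) w : ℂ) =
        inner ℂ (Xf m (K m)) (w - y j) + inner ℂ (Xf m (K m)) (y j) := by
      rw [← inner_add_right, sub_add_cancel]
    calc ‖(inner ℂ (Xf m (K m)) w : ℂ)‖
        ≤ ‖(inner ℂ (Xf m (K m)) (w - y j) : ℂ)‖ + ‖(inner ℂ (Xf m (K m)) (y j) : ℂ)‖ := by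
          rw [hsplit]; exact norm_add_le _ _
      _ ≤ ‖Xf m (K m)‖ * ‖w - y j‖ + ‖(inner ℂ (Xf m (K m)) (y j) : ℂ)‖ := by
          gcongr; exact norm_inner_le_norm _ _
      _ < 1 * (δ / 2) + 1 / ((m : ℝ) + 1) := by
          have : ‖w - y j‖ < δ / 2 := by rwa [← dist_eq_norm]
          rw [(props m).2.2.1 (K m)]
          exact add_lt_add_of_le_of_lt (by nlinarith [norm_nonneg (w - y j)]) hinner
      _ < δ := by linarith
  · -- tendsto eps
    refine auxR (b := fun m => dist (L m) lam + 1 / ((m : ℝ) + 1)) (fun m => ?_) ?_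
    · set A := Tn (φf m (K m)) (Xf m (K m))
      set u := Xf m (K m)
      have hdiff : (A - lam • u) - (A - L m • u) = (L m - lam) • u := by
        rw [sub_smul]; abel
      have h1 : |‖A - lam • u‖ - ‖A - L m • u‖| ≤ dist (L m) lam := by
        calc |‖A - lam • u‖ - ‖A - L m • u‖| ≤ ‖(A - lam • u) - (A - L m • u)‖ :=
            abs_norm_sub_norm_le _ _
          _ = ‖L m - lam‖ * ‖u‖ := by rw [hdiff, norm_smul]
          _ = dist (L m) lam := by rw [(props m).2.2.1 (K m), mul_one, dist_eq_norm]
      calc |‖A - lam • u‖ - eps|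
          ≤ |‖A - lam • u‖ - ‖A - L m • u‖| + |‖A - L m • u‖ - eps| := abs_sub_le _ _ _
        _ ≤ dist (L m) lam + 1 / ((m : ℝ) + 1) := add_le_add h1 (le_of_lt (hK m).2)
    · have h1 : Tendsto (fun m => dist (L m) lam) atTop (nhds 0) := by
        simpa using hconv.dist (tendsto_const_nhds : Tendsto (fun _ : ℕ => lam) atTop (nhds lam))
      simpa using h1.add tendsto_one_div_add_atTop_nhds_zero_nat

theorem stmt16 [TopologicalSpace.SeparableSpace H₀]
    (Hsp dom : Submodule ℂ H₀) (T : H₀ →ₗ[ℂ] H₀)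
    (hHcl : IsClosed ((Hsp : Set H₀)))
    (hT : ActsIn Hsp dom T) (hTcl : IsClosedOp dom T)
    (Hn domn : ℕ → Submodule ℂ H₀) (Tn : ℕ → H₀ →ₗ[ℂ] H₀)
    (hHncl : ∀ n, IsClosed ((Hn n : Set H₀)))
    (hTn : ∀ n, ActsIn (Hn n) (domn n) (Tn n))
    (hTncl : ∀ n, IsClosedOp (domn n) (Tn n))
    (eps : ℝ) (heps : 0 < eps) :
    (∀ lam z : ℂ, EssSpectrum dom T lam → ‖z‖ = eps → EssNear dom T eps (lam + z)) ∧
      (∀ lam z : ℂ, LimEssSpectrum domn Tn lam → ‖z‖ = eps →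
        LimEssNear domn Tn eps (lam + z)) ∧
      IsClosed {lam : ℂ | EssNear dom T eps lam} ∧
      IsClosed {lam : ℂ | LimEssNear domn Tn eps lam} := by
  have heq : {lam : ℂ | EssNear dom T eps lam} =
      {lam : ℂ | LimEssNear (fun _ => dom) (fun _ => T) eps lam} := by
    ext lam
    constructor
    · rintro ⟨x, h1, h2, h3, h4⟩
      exact ⟨id, x, strictMono_id, h1, h2, h3, h4⟩
    · rintro ⟨φ, x, _, h1, h2, h3, h4⟩
      exact ⟨x, h1, h2, h3, h4⟩
  refine ⟨?_, ?_, ?_, ?_⟩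
  · rintro lam z ⟨x, h1, h2, h3, h4⟩ hz
    exact ⟨x, h1, h2, h3, hz ▸ shift_core h2 h4⟩
  · rintro lam z ⟨φ, x, h0, h1, h2, h3, h4⟩ hz
    exact ⟨φ, x, h0, h1, h2, h3, hz ▸ shift_core h2 h4⟩
  · rw [heq]
    exact limEssNear_closed _ _ _
  · exact limEssNear_closed _ _ _

end
end

section
/- If T_n converges to T in generalised strong resolvent sense, then the essential ε-near spectrum of T is contained in the limiting essential ε-near spectrum of (T_n). -/
open Filter Topology

noncomputable section

variable {H₀ : Type} [NormedAddCommGroup H₀] [InnerProductSpace ℂ H₀] [CompleteSpace H₀]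

theorem stmt17 [TopologicalSpace.SeparableSpace H₀]
    (Hsp dom : Submodule ℂ H₀) (T : H₀ →ₗ[ℂ] H₀)
    (hHcl : IsClosed ((Hsp : Set H₀)))
    (hT : ActsIn Hsp dom T) (hTcl : IsClosedOp dom T)
    (Hn domn : ℕ → Submodule ℂ H₀) (Tn : ℕ → H₀ →ₗ[ℂ] H₀)
    (hHncl : ∀ n, IsClosed ((Hn n : Set H₀)))
    (hTn : ∀ n, ActsIn (Hn n) (domn n) (Tn n))
    (hTncl : ∀ n, IsClosedOp (domn n) (Tn n))
    (P : H₀ →L[ℂ] H₀) (Pn : ℕ → H₀ →L[ℂ] H₀)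
    (hP : IsOrthProj Hsp P) (hPn : ∀ n, IsOrthProj (Hn n) (Pn n))
    (hPconv : ∀ y : H₀, Tendsto (fun n => Pn n y) atTop (nhds (P y)))
    (hconv : GSRConv Hsp dom T Hn domn Tn)
    (eps : ℝ) (heps : 0 < eps) (lam : ℂ)
    (hlam : EssNear dom T eps lam) :
    LimEssNear domn Tn eps lam := by
  classical
  obtain ⟨n₀, lam₀, R, Rn, hR, hRn, hRconv⟩ := hconv
  obtain ⟨x, hxdom, hxnorm, hxweak, hxT⟩ := hlam
  set y : ℕ → H₀ := fun k => T (x k) - lam₀ • x k with hydef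
  have hyH : ∀ k, y k ∈ Hsp := fun k =>
    Submodule.sub_mem _ (hT.2.2 _ (hxdom k)) (Submodule.smul_mem _ _ (hT.1 (hxdom k)))
  have hPfix : ∀ u ∈ Hsp, P u = u := by
    intro u hu
    have h1 : u - P u ∈ Hsp := Submodule.sub_mem _ hu (hP u).1
    have h2 : u - P u ∈ Hspᗮ := (hP u).2
    have h3 : (inner ℂ (u - P u) (u - P u) : ℂ) = 0 :=
      (Submodule.mem_orthogonal Hsp (u - P u)).1 h2 _ h1
    have h4 := inner_self_eq_zero.mp h3
    rw [sub_eq_zero] at h4; exact h4.symm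
  have hRy : ∀ k, R (y k) = x k := fun k => hR.2.1 (x k) (hxdom k)
  have hsplit : ∀ n, n ≥ n₀ → ∀ k, Rn n (y k) = Rn n (Pn n (y k)) := by
    intro n hn k
    have h0 : Rn n (y k - Pn n (y k)) = 0 := (hRn n hn).2.2 _ ((hPn n (y k)).2)
    have h1 : Rn n (y k) = Rn n (Pn n (y k)) + Rn n (y k - Pn n (y k)) := by
      rw [← map_add]; congr 1; abel
    rw [h1, h0, add_zero]
  set g : ℕ → ℕ → H₀ := fun k n =>
    ((‖Rn n (y k)‖ : ℂ))⁻¹ • (Pn n (y k) + (lam₀ - lam) • Rn n (y k)) with hgdef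
  have hRk : ∀ k, Tendsto (fun n => Rn n (y k)) atTop (nhds (x k)) := fun k =>
    (hRy k) ▸ hRconv (y k)
  have hPk : ∀ k, Tendsto (fun n => Pn n (y k)) atTop (nhds (y k)) := by
    intro k
    have := hPconv (y k); rwa [hPfix _ (hyH k)] at this
  have hg : ∀ k, Tendsto (fun n => g k n) atTop (nhds (T (x k) - lam • x k)) := by
    intro k
    have h3 : Tendsto (fun n => ((‖Rn n (y k)‖ : ℝ) : ℂ)) atTop (nhds ((1 : ℝ) : ℂ)) := by
      have h1 := (hRk k).norm
      rw [hxnorm k] at h1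
      exact (Complex.continuous_ofReal.tendsto 1).comp h1
    have h4 : Tendsto (fun n => ((‖Rn n (y k)‖ : ℂ))⁻¹) atTop (nhds 1) := by
      simpa using h3.inv₀ (by norm_num)
    have h5 : Tendsto (fun n => Pn n (y k) + (lam₀ - lam) • Rn n (y k)) atTop
        (nhds (y k + (lam₀ - lam) • x k)) := (hPk k).add ((hRk k).const_smul _)
    have h6 := h4.smul h5
    have h7 : (1 : ℂ) • (y k + (lam₀ - lam) • x k) = T (x k) - lam • x k := by
      rw [one_smul, hydef]; module
    rwa [h7] at h6
  have hQ : ∀ k : ℕ, ∃ N : ℕ, ∀ n ≥ N, n ≥ n₀ ∧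
      ‖Rn n (y k) - x k‖ < 1 / (k + 1 : ℝ) ∧
      |‖g k n‖ - ‖T (x k) - lam • x k‖| < 1 / (k + 1 : ℝ) := by
    intro k
    have hδ : (0 : ℝ) < 1 / (k + 1 : ℝ) := by positivity
    have ev1 : ∀ᶠ n in atTop, n ≥ n₀ := eventually_ge_atTop n₀
    have t2 : Tendsto (fun n => ‖Rn n (y k) - x k‖) atTop (nhds 0) := by
      have h0 : Tendsto (fun n => Rn n (y k) - x k) atTop (nhds (x k - x k)) :=
        (hRk k).sub tendsto_const_nhds
      rw [sub_self] at h0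
      simpa using h0.norm
    have ev2 := t2.eventually_lt_const hδ
    have t3 : Tendsto (fun n => |‖g k n‖ - ‖T (x k) - lam • x k‖|) atTop (nhds 0) := by
      have := ((hg k).norm.sub_const (‖T (x k) - lam • x k‖)).abs
      simpa using this
    have ev3 := t3.eventually_lt_const hδ
    exact eventually_atTop.mp (((ev1.and ev2).and ev3).mono (fun n h => ⟨h.1.1, h.1.2, h.2⟩))
  choose N hN using hQ
  set φ : ℕ → ℕ := fun k => Nat.rec (N 0) (fun k ih => max (N (k + 1)) (ih + 1)) k with hφdef
  have hφmono : StrictMono φ := strictMono_nat_of_lt_succ (fun k =>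
    lt_of_lt_of_le (Nat.lt_succ_self _) (le_max_right _ _))
  have hφN : ∀ k, N k ≤ φ k := by
    intro k; cases k with
    | zero => exact le_refl _
    | succ k => exact le_max_left _ _
  have hQφ := fun k => hN k (φ k) (hφN k)
  set z : ℕ → H₀ := fun k => ((‖Rn (φ k) (y k)‖ : ℂ))⁻¹ • Rn (φ k) (y k) with hzdef
  have hvpos : ∀ k, 0 < ‖Rn (φ k) (y k)‖ := by
    intro k
    have h1 : ‖Rn (φ k) (y k) - x k‖ < 1 := lt_of_lt_of_le (hQφ k).2.1 (by
      rw [div_le_one (by positivity)]; norm_num)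
    have h2 : (1 : ℝ) - ‖Rn (φ k) (y k) - x k‖ ≤ ‖Rn (φ k) (y k)‖ := by
      have := norm_sub_norm_le (x k) (Rn (φ k) (y k))
      rw [hxnorm k, norm_sub_rev] at this
      linarith
    linarith
  have hznorm : ∀ k, ‖z k‖ = 1 := by
    intro k
    rw [hzdef]
    simp only [norm_smul, norm_inv, Complex.norm_real, Real.norm_eq_abs,
      abs_of_nonneg (norm_nonneg _)]
    exact inv_mul_cancel₀ (hvpos k).ne'
  have hzmem : ∀ k, z k ∈ domn (φ k) := by
    intro k
    have h1 := ((hRn (φ k) (hQφ k).1).1 (Pn (φ k) (y k)) (hPn (φ k) (y k)).1).1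
    rw [← hsplit (φ k) (hQφ k).1 k] at h1
    exact Submodule.smul_mem _ _ h1
  have hznear : ∀ k, ‖z k - x k‖ ≤ 2 / (k + 1 : ℝ) := by
    intro k
    have hv := (hQφ k).2.1
    have h1 : ‖z k - Rn (φ k) (y k)‖ = |1 - ‖Rn (φ k) (y k)‖| := by
      rw [hzdef]
      have : ((‖Rn (φ k) (y k)‖ : ℂ))⁻¹ • Rn (φ k) (y k) - Rn (φ k) (y k)
          = (((‖Rn (φ k) (y k)‖ : ℂ))⁻¹ - 1) • Rn (φ k) (y k) := by
        rw [sub_smul, one_smul]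
      rw [this, norm_smul]
      rw [show ((‖Rn (φ k) (y k)‖ : ℂ))⁻¹ - 1 = (((‖Rn (φ k) (y k)‖⁻¹ - 1 : ℝ)) : ℂ) by
        push_cast; ring]
      rw [Complex.norm_real, Real.norm_eq_abs]
      rw [show |‖Rn (φ k) (y k)‖⁻¹ - 1| * ‖Rn (φ k) (y k)‖
          = |(‖Rn (φ k) (y k)‖⁻¹ - 1) * ‖Rn (φ k) (y k)‖| from by
        rw [abs_mul, abs_of_nonneg (norm_nonneg _)]]
      congr 1
      rw [sub_mul, inv_mul_cancel₀ (hvpos k).ne', one_mul]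
    have h2 : |1 - ‖Rn (φ k) (y k)‖| ≤ ‖Rn (φ k) (y k) - x k‖ := by
      have := abs_norm_sub_norm_le (x k) (Rn (φ k) (y k))
      rw [hxnorm k, norm_sub_rev] at this
      exact this
    calc ‖z k - x k‖ ≤ ‖z k - Rn (φ k) (y k)‖ + ‖Rn (φ k) (y k) - x k‖ := by
            have := norm_sub_le_norm_sub_add_norm_sub (z k) (Rn (φ k) (y k)) (x k)
            linarith [norm_sub_le (z k - Rn (φ k) (y k)) (x k - Rn (φ k) (y k))]
      _ ≤ ‖Rn (φ k) (y k) - x k‖ + ‖Rn (φ k) (y k) - x k‖ := by rw [h1]; linarith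
      _ ≤ 2 / (k + 1 : ℝ) := by
            have := le_of_lt hv
            rw [show (2 : ℝ) / (k + 1) = 1 / (k + 1) + 1 / (k + 1) by ring]
            linarith
  have hTz : ∀ k, Tn (φ k) (z k) - lam • z k = g k (φ k) := by
    intro k
    have h1 := ((hRn (φ k) (hQφ k).1).1 (Pn (φ k) (y k)) (hPn (φ k) (y k)).1).2
    rw [← hsplit (φ k) (hQφ k).1 k] at h1
    have h2 : Tn (φ k) (Rn (φ k) (y k)) = Pn (φ k) (y k) + lam₀ • Rn (φ k) (y k) := by
      rw [← h1]; abel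
    rw [hzdef, hgdef]
    simp only [map_smul, h2]
    module
  refine ⟨φ, z, hφmono, hzmem, hznorm, ?_, ?_⟩
  · intro w
    have hd : Tendsto (fun k : ℕ => (2 : ℝ) / (k + 1)) atTop (nhds 0) := by
      have := tendsto_one_div_add_atTop_nhds_zero_nat (𝕜 := ℝ)
      have h2 := this.const_mul (2 : ℝ)
      simpa [mul_one_div, div_eq_mul_inv] using h2
    have h2 : Tendsto (fun k => (inner ℂ (z k - x k) w : ℂ)) atTop (nhds 0) := by
      exact squeeze_zero_norm
        (fun k => le_trans (norm_inner_le_norm _ _)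
          (mul_le_mul_of_nonneg_right (hznear k) (norm_nonneg w)))
        (by simpa using hd.mul_const ‖w‖)
    have h3 := hxweak w
    simp only [sub_zero] at h3 ⊢
    have h4 := h3.add h2
    rw [add_zero] at h4
    refine h4.congr (fun k => ?_)
    rw [inner_sub_left]; ring
  · have h1 : Tendsto (fun k => ‖g k (φ k)‖ - ‖T (x k) - lam • x k‖) atTop (nhds 0) := by
      exact squeeze_zero_norm
        (fun k => le_of_lt (by simpa [Real.norm_eq_abs] using (hQφ k).2.2))
        tendsto_one_div_add_atTop_nhds_zero_nat
    have h2 := h1.add hxT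
    rw [zero_add] at h2
    have h3 : Tendsto (fun k => ‖g k (φ k)‖) atTop (nhds eps) := by
      refine h2.congr (fun k => ?_); ring
    refine h3.congr (fun k => ?_)
    rw [← hTz k]

end
end

section
/- If there exists λ_0 ∈ ⋂_n ρ(T_n) ∩ ρ(T) such that the resolvents ((T_n − λ_0)^{-1}) form a discretely compact sequence and (T_n* − conj(λ_0))^{-1}P_n → (T* − conj(λ_0))^{-1}P strongly, then the limiting essential ε-near spectrum Λ_{ess,ε}((T_n)) is empty for every ε > 0. -/
open Filter Topology

noncomputable section

variable {H₀ : Type} [NormedAddCommGroup H₀] [InnerProductSpace ℂ H₀] [CompleteSpace H₀]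

theorem stmt18 [TopologicalSpace.SeparableSpace H₀]
    (Hsp dom : Submodule ℂ H₀) (T : H₀ →ₗ[ℂ] H₀)
    (hHcl : IsClosed ((Hsp : Set H₀)))
    (hT : ActsIn Hsp dom T) (hTcl : IsClosedOp dom T)
    (Hn domn : ℕ → Submodule ℂ H₀) (Tn : ℕ → H₀ →ₗ[ℂ] H₀)
    (hHncl : ∀ n, IsClosed ((Hn n : Set H₀)))
    (hTn : ∀ n, ActsIn (Hn n) (domn n) (Tn n))
    (hTncl : ∀ n, IsClosedOp (domn n) (Tn n))
    (P : H₀ →L[ℂ] H₀) (Pn : ℕ → H₀ →L[ℂ] H₀)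
    (hP : IsOrthProj Hsp P) (hPn : ∀ n, IsOrthProj (Hn n) (Pn n))
    (hPconv : ∀ y : H₀, Tendsto (fun n => Pn n y) atTop (nhds (P y)))
    (lam₀ : ℂ) (R : H₀ →L[ℂ] H₀) (Rn : ℕ → H₀ →L[ℂ] H₀)
    (hresT : InResolvent Hsp dom T lam₀ R)
    (hres : ∀ n, InResolvent (Hn n) (domn n) (Tn n) lam₀ (Rn n))
    (hdc : DiscretelyCompact Hsp Hn Rn)
    (hadjconv : ∀ y : H₀, Tendsto (fun n => (ContinuousLinearMap.adjoint (Rn n)) (Pn n y))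
      atTop (nhds ((ContinuousLinearMap.adjoint R) (P y)))) :
    ∀ eps : ℝ, 0 < eps → {lam : ℂ | LimEssNear domn Tn eps lam} = ∅ := by
  intro eps heps
  ext lam
  simp only [Set.mem_setOf_eq, Set.mem_empty_iff_false, iff_false]
  rintro ⟨φ, x, hφ, hdom, hnorm, hweak, htend⟩
  -- y k is bounded and in Hn (φ k)
  set y : ℕ → H₀ := fun k => Tn (φ k) (x k) - lam₀ • x k with hy
  have hymem : ∀ k, y k ∈ Hn (φ k) := by
    intro k
    exact Submodule.sub_mem _ ((hTn (φ k)).2.2 _ (hdom k))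
      (Submodule.smul_mem _ _ ((hTn (φ k)).1 (hdom k)))
  have hbdd : ∃ C : ℝ, ∀ k, ‖y k‖ ≤ C := by
    obtain ⟨M, hM⟩ := htend.bddAbove_range
    refine ⟨M + ‖lam - lam₀‖, fun k => ?_⟩
    have h1 : ‖Tn (φ k) (x k) - lam • x k‖ ≤ M := hM ⟨k, rfl⟩
    have h2 : y k = (Tn (φ k) (x k) - lam • x k) + (lam - lam₀) • x k := by
      simp only [hy]; rw [sub_smul]; abel
    calc ‖y k‖ ≤ ‖Tn (φ k) (x k) - lam • x k‖ + ‖(lam - lam₀) • x k‖ := by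
          rw [h2]; exact norm_add_le _ _
      _ ≤ M + ‖lam - lam₀‖ := by
          rw [norm_smul, hnorm k, mul_one]; exact add_le_add h1 le_rfl
  obtain ⟨ψ, z, hψ, hz, hconv⟩ := hdc φ y hφ hymem hbdd
  have hRx : ∀ k, Rn (φ (ψ k)) (y (ψ k)) = x (ψ k) := fun k =>
    (hres (φ (ψ k))).2.1 _ (hdom (ψ k))
  have hconv' : Tendsto (fun k => x (ψ k)) atTop (nhds z) := by
    simpa only [hRx] using hconv
  -- weak convergence along subsequence + norm convergence ⇒ z = 0
  have hw : Tendsto (fun k => (inner ℂ (x (ψ k)) z : ℂ)) atTop (nhds 0) := by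
    have := (hweak z).comp (hψ.tendsto_atTop)
    simpa [Function.comp_def] using this
  have hw2 : Tendsto (fun k => (inner ℂ (x (ψ k)) z : ℂ)) atTop (nhds (inner ℂ z z)) :=
    Filter.Tendsto.inner hconv' tendsto_const_nhds
  have hzz : (inner ℂ z z : ℂ) = 0 := (tendsto_nhds_unique hw2 hw)
  have hz0 : z = 0 := inner_self_eq_zero.mp hzz
  have : Tendsto (fun k => ‖x (ψ k)‖) atTop (nhds 0) := by
    rw [← norm_zero (E := H₀), ← hz0]
    exact hconv'.norm
  have h1 : Tendsto (fun _ : ℕ => (1 : ℝ)) atTop (nhds 0) := by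
    simpa only [hnorm] using this
  exact zero_ne_one (tendsto_nhds_unique h1 tendsto_const_nhds)


end
end
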